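/- arXiv:1212.5942 — 8 statements merged into one kernel-verified Lean document; each statement's English description precedes it below -/
import Mathlib

section
/- Let H be a real Hilbert space, let m ≥ 1, and for each i ∈ {1,…,m} let α_i ∈ (0,1), let T_i : H → H be α_i-averaged, and let (e_{i,n})_{n∈ℕ} be a sequence in H. Set α = m·max{α_1,…,α_m}/(1+(m−1)·max{α_1,…,α_m}), let (λ_n)_{n∈ℕ} be a sequence in (0, 1/α), suppose Fix(T_1∘⋯∘T_m) ≠ ∅, suppose Σ_{n∈ℕ} λ_n(1−αλ_n) = +∞ and Σ_{n∈ℕ} λ_n‖e_{i,n}‖ < +∞ for every i, let z_0 ∈ H and define z_{n+1} = z_n + λ_n( T_1(T_2(⋯T_{m−1}(T_m z_n + e_{m,n}) + e_{m−1,n}⋯) + e_{2,n}) + e_{1,n} − z_n ). Then there exists z̄ ∈ Fix(T_1∘⋯∘T_m) such that z_n converges weakly to z̄. -/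
open Filter Topology
open scoped RealInnerProductSpace

variable {H : Type*} [NormedAddCommGroup H] [InnerProductSpace ℝ H] [CompleteSpace H]

set_option linter.unusedSectionVars false
set_option linter.unusedVariables false
set_option maxHeartbeats 1000000

/-- `T` is nonexpansive. -/
def IsNonexpansiveOp (T : H → H) : Prop :=
  ∀ x y, ‖T x - T y‖ ≤ ‖x - y‖

/-- `T` is `α`-averaged: `T = (1 - α) • Id + α • R` for some nonexpansive `R`. -/
def IsAveragedOp (α : ℝ) (T : H → H) : Prop :=
  ∃ R : H → H, IsNonexpansiveOp R ∧ ∀ x, T x = (1 - α) • x + α • R x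

/-- `z n` converges weakly to `w`. -/
def WeakLim (z : ℕ → H) (w : H) : Prop :=
  ∀ y : H, Tendsto (fun n => ⟪z n, y⟫) atTop (nhds ⟪w, y⟫)

/-- `compFrom T i k = T i ∘ T (i+1) ∘ ⋯ ∘ T (i+k-1)`; in particular
`compFrom T 1 m = T 1 ∘ ⋯ ∘ T m` and `compFrom T i 0 = id`. -/
def compFrom (T : ℕ → H → H) : ℕ → ℕ → H → H
  | _, 0 => id
  | i, (k + 1) => T i ∘ compFrom T (i + 1) k

/-- Inexact composition with errors: `inexactFrom T e 1 m z =
T 1 (T 2 (⋯ T (m-1) (T m z + e m) + e (m-1) ⋯) + e 2) + e 1`. -/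
def inexactFrom (T : ℕ → H → H) (e : ℕ → H) : ℕ → ℕ → H → H
  | _, 0 => id
  | i, (k + 1) => fun z => T i (inexactFrom T e (i + 1) k z) + e i

/-! ### Auxiliary lemmas -/

lemma normsq_combo (μ : ℝ) (u v : H) :
    ‖u + μ•(v-u)‖^2 = (1-μ)*‖u‖^2 + μ*‖v‖^2 - μ*(1-μ)*‖u-v‖^2 := by
  simp only [← real_inner_self_eq_norm_sq, inner_add_add_self, inner_sub_sub_self,
    real_inner_smul_left, real_inner_smul_right, inner_sub_left, inner_sub_right,
    real_inner_comm u v]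
  ring

/-- quantitative averagedness inequality -/
def AvgIneq (α : ℝ) (T : H → H) : Prop :=
  ∀ x y, ‖T x - T y‖^2 + (1-α)/α * ‖(x - T x) - (y - T y)‖^2 ≤ ‖x - y‖^2

lemma avgIneq_of_avg {α : ℝ} {T : H → H} (hα : α ∈ Set.Ioo (0:ℝ) 1)
    (h : IsAveragedOp α T) : AvgIneq α T := by
  obtain ⟨R, hR, hTR⟩ := h
  intro x y
  have hr : ‖R x - R y‖ ≤ ‖x - y‖ := hR x y
  have h1 : T x - T y = (1-α) • (x-y) + α • (R x - R y) := by
    rw [hTR x, hTR y]; module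
  have h2 : (x - T x) - (y - T y) = α • ((x-y) - (R x - R y)) := by
    rw [hTR x, hTR y]; module
  rw [h1, h2]
  have e1 : ‖(1-α) • (x-y) + α • (R x - R y)‖^2
      = (1-α)^2*‖x-y‖^2 + 2*((1-α)*α)*⟪x-y, R x - R y⟫ + α^2*‖R x - R y‖^2 := by
    simp only [← real_inner_self_eq_norm_sq, inner_add_add_self, real_inner_smul_left,
      real_inner_smul_right, real_inner_comm (R x - R y) (x - y)]
    ring
  have e2 : ‖α • ((x-y) - (R x - R y))‖^2
      = α^2*(‖x-y‖^2 - 2*⟪x-y, R x - R y⟫ + ‖R x - R y‖^2) := by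
    simp only [← real_inner_self_eq_norm_sq, real_inner_smul_left, real_inner_smul_right,
      inner_sub_sub_self, real_inner_comm (R x - R y) (x - y)]
    ring
  rw [e1, e2]
  have hα0 := hα.1
  have key : (1-α)/α * (α^2*(‖x-y‖^2 - 2*⟪x-y, R x - R y⟫ + ‖R x - R y‖^2))
      = α*(1-α)*(‖x-y‖^2 - 2*⟪x-y, R x - R y⟫ + ‖R x - R y‖^2) := by
    field_simp
  rw [key]
  have hrs : ‖R x - R y‖^2 ≤ ‖x-y‖^2 := by
    nlinarith [norm_nonneg (R x - R y), norm_nonneg (x - y)]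
  nlinarith [hα.2, hα.1, hrs]

lemma avg_of_avgIneq {α : ℝ} {T : H → H} (hα : α ∈ Set.Ioo (0:ℝ) 1)
    (h : AvgIneq α T) : IsAveragedOp α T := by
  have hα0 : (0:ℝ) < α := hα.1
  have hαne : α ≠ 0 := hα0.ne'
  refine ⟨fun x => (1 - 1/α) • x + (1/α) • T x, ?_, ?_⟩
  · intro x y
    have hi := h x y
    have e0 : (1 - 1/α) • x + (1/α) • T x - ((1 - 1/α) • y + (1/α) • T y)
        = (1/α) • ((T x - T y) - (1-α) • (x - y)) := by
      match_scalars <;> field_simp <;> ring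
    rw [e0, norm_smul]
    have e1 : ‖(T x - T y) - (1-α) • (x-y)‖^2
        = ‖T x - T y‖^2 - 2*(1-α)*⟪T x - T y, x - y⟫ + (1-α)^2*‖x-y‖^2 := by
      simp only [← real_inner_self_eq_norm_sq, inner_sub_sub_self, real_inner_smul_left,
        real_inner_smul_right, real_inner_comm (x - y) (T x - T y)]
      ring
    have e2 : ‖(x - T x) - (y - T y)‖^2
        = ‖x - y‖^2 - 2*⟪T x - T y, x - y⟫ + ‖T x - T y‖^2 := by
      have h3 : (x - T x) - (y - T y) = (x - y) - (T x - T y) := by abel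
      rw [h3]
      simp only [← real_inner_self_eq_norm_sq, inner_sub_sub_self,
        real_inner_comm (x - y) (T x - T y)]
      ring
    rw [e2] at hi
    have hmul := mul_le_mul_of_nonneg_left hi (le_of_lt hα0)
    have expand : α * (‖T x - T y‖^2 + (1-α)/α * (‖x - y‖^2 - 2*⟪T x - T y, x - y⟫ + ‖T x - T y‖^2))
        = α*‖T x - T y‖^2 + (1-α)*(‖x - y‖^2 - 2*⟪T x - T y, x - y⟫ + ‖T x - T y‖^2) := by
      field_simp
    rw [expand] at hmul
    have key : ‖(T x - T y) - (1-α) • (x-y)‖^2 ≤ α^2 * ‖x-y‖^2 := by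
      rw [e1]; nlinarith [hmul]
    have hle : ‖(T x - T y) - (1-α) • (x-y)‖ ≤ α * ‖x-y‖ := by
      have h1 : (0:ℝ) ≤ α * ‖x-y‖ := by positivity
      nlinarith [norm_nonneg ((T x - T y) - (1-α) • (x-y))]
    calc ‖(1/α : ℝ)‖ * ‖(T x - T y) - (1-α) • (x-y)‖
        ≤ ‖(1/α : ℝ)‖ * (α * ‖x-y‖) := mul_le_mul_of_nonneg_left hle (norm_nonneg _)
      _ = ‖x - y‖ := by
          rw [Real.norm_eq_abs, abs_of_pos (by positivity)]
          field_simp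
  · intro x
    rw [smul_add, smul_smul, smul_smul, mul_one_div, div_self hαne, one_smul,
      mul_sub, mul_one, mul_one_div, div_self hαne]
    module

lemma nonexpansive_of_avgIneq {α : ℝ} {T : H → H} (hα : α ∈ Set.Ioo (0:ℝ) 1)
    (h : AvgIneq α T) : IsNonexpansiveOp T := by
  intro x y
  have hi := h x y
  have h1 : (0:ℝ) ≤ (1-α)/α * ‖(x - T x) - (y - T y)‖^2 := by
    have : (0:ℝ) ≤ (1-α)/α := by
      apply div_nonneg <;> nlinarith [hα.1, hα.2]
    positivity
  nlinarith [norm_nonneg (T x - T y), norm_nonneg (x - y)]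

lemma avgIneq_mono {α β : ℝ} {T : H → H} (hα : 0 < α) (hβ : α ≤ β) (hβ1 : β < 1)
    (h : AvgIneq α T) : AvgIneq β T := by
  intro x y
  have hi := h x y
  have hβ0 : (0:ℝ) < β := lt_of_lt_of_le hα hβ
  have hle : (1-β)/β ≤ (1-α)/α := by
    rw [div_le_div_iff₀ hβ0 hα]; nlinarith
  nlinarith [sq_nonneg ‖(x - T x) - (y - T y)‖,
    mul_le_mul_of_nonneg_right hle (sq_nonneg ‖(x - T x) - (y - T y)‖)]

lemma harmonic_norm (s t : ℝ) (hs : 0 < s) (ht : 0 < t) (a b : H) :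
    (s*t/(s+t)) * ‖a+b‖^2 ≤ s*‖a‖^2 + t*‖b‖^2 := by
  have h := norm_add_le a b
  have h2 : ‖a+b‖^2 ≤ (‖a‖+‖b‖)^2 := by nlinarith [norm_nonneg (a+b)]
  rw [div_mul_eq_mul_div, div_le_iff₀ (by positivity)]
  have h3 : s*t*‖a+b‖^2 ≤ s*t*(‖a‖+‖b‖)^2 :=
    mul_le_mul_of_nonneg_left h2 (by positivity)
  nlinarith [sq_nonneg (s*‖a‖ - t*‖b‖)]

lemma gamma_mem {α β : ℝ} (hα : α ∈ Set.Ioo (0:ℝ) 1) (hβ : β ∈ Set.Ioo (0:ℝ) 1) :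
    (α+β-2*α*β)/(1-α*β) ∈ Set.Ioo (0:ℝ) 1 := by
  obtain ⟨ha0, ha1⟩ := hα; obtain ⟨hb0, hb1⟩ := hβ
  have hd : 0 < 1 - α*β := by nlinarith
  have hn : 0 < α+β-2*α*β := by nlinarith
  constructor
  · positivity
  · rw [div_lt_one hd]; nlinarith

lemma avgIneq_comp {α β : ℝ} {T₁ T₂ : H → H} (hα : α ∈ Set.Ioo (0:ℝ) 1)
    (hβ : β ∈ Set.Ioo (0:ℝ) 1) (h1 : AvgIneq α T₁) (h2 : AvgIneq β T₂) :
    AvgIneq ((α+β-2*α*β)/(1-α*β)) (T₁ ∘ T₂) := by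
  obtain ⟨ha0, ha1⟩ := hα; obtain ⟨hb0, hb1⟩ := hβ
  have hd : 0 < 1 - α*β := by nlinarith
  have hn : 0 < α+β-2*α*β := by nlinarith
  intro x y
  set γ := (α+β-2*α*β)/(1-α*β) with hγ
  set s := (1-β)/β with hs
  set t := (1-α)/α with ht
  have hs0 : 0 < s := by apply div_pos <;> nlinarith
  have ht0 : 0 < t := by apply div_pos <;> nlinarith
  have hst : s*t/(s+t) = (1-γ)/γ := by
    have h4 : α ≠ 0 := ha0.ne'
    have h5 : β ≠ 0 := hb0.ne'
    have h2' : α+β-2*α*β ≠ 0 := hn.ne'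
    have h3' : 1-α*β ≠ 0 := hd.ne'
    have e1 : s+t = (α+β-2*α*β)/(α*β) := by rw [hs, ht]; field_simp; ring
    rw [e1, hγ, hs, ht]
    rw [one_sub_div h3', div_div_div_cancel_right₀ h3', div_eq_div_iff (by positivity) h2']
    field_simp
    ring
  have key2 := h2 x y
  have key1 := h1 (T₂ x) (T₂ y)
  have hsum : (x - T₁ (T₂ x)) - (y - T₁ (T₂ y))
      = ((x - T₂ x) - (y - T₂ y)) + ((T₂ x - T₁ (T₂ x)) - (T₂ y - T₁ (T₂ y))) := by abel
  have hharm := harmonic_norm s t hs0 ht0 ((x - T₂ x) - (y - T₂ y))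
    ((T₂ x - T₁ (T₂ x)) - (T₂ y - T₁ (T₂ y)))
  rw [hst] at hharm
  show ‖T₁ (T₂ x) - T₁ (T₂ y)‖^2 + (1-γ)/γ * ‖(x - T₁ (T₂ x)) - (y - T₁ (T₂ y))‖^2 ≤ ‖x-y‖^2
  rw [hsum]
  linarith [key1, key2, hharm]

lemma phi_mem {M : ℝ} (hM : M ∈ Set.Ioo (0:ℝ) 1) {k : ℕ} (hk : 1 ≤ k) :
    (k*M/(1+((k:ℝ)-1)*M)) ∈ Set.Ioo (0:ℝ) 1 := by
  obtain ⟨h0, h1⟩ := hM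
  have hk1 : (1:ℝ) ≤ (k:ℝ) := by exact_mod_cast hk
  have hd : 0 < 1+((k:ℝ)-1)*M := by nlinarith
  constructor
  · apply div_pos _ hd; nlinarith
  · rw [div_lt_one hd]; nlinarith

lemma avgIneq_compFrom {T : ℕ → H → H} {M : ℝ} (hM : M ∈ Set.Ioo (0:ℝ) 1) {m : ℕ}
    (hT : ∀ i ∈ Finset.Icc 1 m, AvgIneq M (T i)) :
    ∀ k, 1 ≤ k → ∀ i, 1 ≤ i → i + k ≤ m + 1 →
      AvgIneq ((k:ℝ)*M/(1+((k:ℝ)-1)*M)) (compFrom T i k) := by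
  intro k
  induction k with
  | zero => omega
  | succ k ih =>
    intro _ i hi him
    rcases Nat.eq_zero_or_pos k with hk0 | hk1
    · subst hk0
      have hTi : AvgIneq M (T i) := hT i (Finset.mem_Icc.mpr ⟨hi, by omega⟩)
      have heq : ((1:ℕ):ℝ)*M/(1+(((1:ℕ):ℝ)-1)*M) = M := by norm_num
      rw [heq]
      intro x y
      exact hTi x y
    · have hrec := ih hk1 (i+1) (by omega) (by omega)
      have hTi : AvgIneq M (T i) := hT i (Finset.mem_Icc.mpr ⟨hi, by omega⟩)
      have hβ := phi_mem hM hk1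
      have hcomp := avgIneq_comp hM hβ hTi hrec
      have heq : (M + (k:ℝ)*M/(1+((k:ℝ)-1)*M) - 2*M*((k:ℝ)*M/(1+((k:ℝ)-1)*M)))
          / (1 - M*((k:ℝ)*M/(1+((k:ℝ)-1)*M)))
          = ((k:ℝ)+1)*M/(1+(((k:ℝ)+1)-1)*M) := by
        obtain ⟨h0, h1⟩ := hM
        have hk1' : (1:ℝ) ≤ (k:ℝ) := by exact_mod_cast hk1
        have hd1 : (0:ℝ) < 1+((k:ℝ)-1)*M := by nlinarith
        have hd2 : (0:ℝ) < 1+(k:ℝ)*M := by nlinarith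
        have hd1' := hd1.ne'
        have hd2' := hd2.ne'
        have hnum : 1 - M*((k:ℝ)*M/(1+((k:ℝ)-1)*M)) = (1-M)*(1+(k:ℝ)*M)/(1+((k:ℝ)-1)*M) := by
          rw [eq_div_iff hd1', sub_mul, mul_assoc, div_mul_cancel₀ _ hd1']; ring
        rw [hnum]
        have h1M : (1:ℝ)-M ≠ 0 := by nlinarith
        have e : M + (k:ℝ)*M/(1+((k:ℝ)-1)*M) - 2*M*((k:ℝ)*M/(1+((k:ℝ)-1)*M))
            = (M*(1+((k:ℝ)-1)*M) + (k:ℝ)*M - 2*M*((k:ℝ)*M))/(1+((k:ℝ)-1)*M) := by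
          rw [eq_div_iff hd1', sub_mul, add_mul, mul_assoc (2*M),
            div_mul_cancel₀ _ hd1']
        rw [e, div_div_div_cancel_right₀ hd1',
          div_eq_div_iff (mul_ne_zero h1M hd2') (by ring_nf; ring_nf at hd2'; exact hd2')]
        ring
      rw [heq] at hcomp
      have hcast : (((k+1:ℕ)):ℝ) = (k:ℝ)+1 := by push_cast; ring
      rw [hcast]
      intro x y
      exact hcomp x y

lemma quasiFejer_converges {b c : ℕ → ℝ} (hb : ∀ n, 0 ≤ b n) (hc : ∀ n, 0 ≤ c n)
    (hsum : Summable c) (hrec : ∀ n, b (n+1) ≤ b n + c n) :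
    ∃ l, Tendsto b atTop (nhds l) := by
  set t := fun n => ∑' k, c (k+n) with ht
  have htail : ∀ n, t n = c n + t (n+1) := by
    intro n
    have hs : Summable (fun k => c (k+n)) := by
      rw [summable_nat_add_iff]; exact hsum
    have h0 := Summable.tsum_eq_zero_add hs
    simp only [zero_add] at h0
    rw [ht]; simp only []
    rw [h0]
    congr 1
    apply tsum_congr; intro k; congr 1; omega
  have hg : ∀ n, b (n+1) + t (n+1) ≤ b n + t n := by
    intro n; rw [htail n]; linarith [hrec n]
  have hganti : Antitone (fun n => b n + t n) := antitone_nat_of_succ_le hg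
  have ht0 : ∀ n, 0 ≤ t n := fun n => tsum_nonneg (fun k => hc _)
  have hbdd : BddBelow (Set.range (fun n => b n + t n)) := by
    refine ⟨0, ?_⟩
    rintro x ⟨n, rfl⟩
    have := hb n; have := ht0 n; dsimp; linarith
  have hgconv := tendsto_atTop_ciInf hganti hbdd
  have httend : Tendsto t atTop (nhds 0) := tendsto_sum_nat_add c
  refine ⟨(⨅ n, (b n + t n)) - 0, ?_⟩
  have h2 : Tendsto (fun n => (b n + t n) - t n) atTop (nhds ((⨅ n, (b n + t n)) - 0)) :=
    Tendsto.sub hgconv httend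
  simpa using h2

lemma bound_of_quasiFejer {b c : ℕ → ℝ} (hc : ∀ n, 0 ≤ c n)
    (hsum : Summable c) (hrec : ∀ n, b (n+1) ≤ b n + c n) :
    ∀ n, b n ≤ b 0 + ∑' k, c k := by
  have key : ∀ n, b n ≤ b 0 + ∑ i ∈ Finset.range n, c i := by
    intro n
    induction n with
    | zero => simp
    | succ n ih =>
      rw [Finset.sum_range_succ]
      linarith [hrec n]
  intro n
  have := Summable.sum_le_tsum (Finset.range n) (fun i _ => hc i) hsum
  linarith [key n]

lemma freq_small {w s : ℕ → ℝ} (hw : ∀ n, 0 ≤ w n) (hs : ∀ n, 0 ≤ s n)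
    (hdiv : ¬ Summable w) (hsum : Summable fun n => w n * s n) :
    ∀ ε > (0:ℝ), ∀ N, ∃ n ≥ N, s n < ε := by
  intro ε hε N
  by_contra hcon
  push_neg at hcon
  apply hdiv
  rw [← summable_nat_add_iff N]
  apply Summable.of_nonneg_of_le (fun n => hw _) (fun n => ?_)
    (((summable_nat_add_iff N).2 hsum).mul_left (1/ε))
  have h1 : ε ≤ s (n+N) := hcon (n+N) (by omega)
  have h2 : w (n+N) * ε ≤ w (n+N) * s (n+N) := mul_le_mul_of_nonneg_left h1 (hw _)
  rw [one_div, inv_mul_eq_div, le_div_iff₀ hε]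
  linarith

lemma tendsto_zero_of_freq {a d : ℕ → ℝ} (ha : ∀ n, 0 ≤ a n) (hd : ∀ n, 0 ≤ d n)
    (hsum : Summable d) (hrec : ∀ n, a (n+1) ≤ a n + d n)
    (hfreq : ∀ ε > (0:ℝ), ∀ N, ∃ n ≥ N, a n < ε) :
    Tendsto a atTop (nhds 0) := by
  rw [Metric.tendsto_atTop]
  intro ε hε
  set t := fun n => ∑' k, d (k+n) with ht
  have httend : Tendsto t atTop (nhds 0) := tendsto_sum_nat_add d
  have ht0 : ∀ n, 0 ≤ t n := fun n => tsum_nonneg (fun k => hd _)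
  obtain ⟨N, hN⟩ := (Metric.tendsto_atTop.1 httend) (ε/2) (by linarith)
  have htN : t N < ε/2 := by
    have := hN N le_rfl
    rw [Real.dist_eq, sub_zero, abs_of_nonneg (ht0 N)] at this
    exact this
  obtain ⟨n₀, hn₀N, hn₀⟩ := hfreq (ε/2) (by linarith) N
  refine ⟨n₀, fun n hn => ?_⟩
  have key : ∀ k, a (n₀ + k) ≤ a n₀ + ∑ i ∈ Finset.range k, d (n₀ + i) := by
    intro k
    induction k with
    | zero => simp
    | succ k ih =>
      rw [Finset.sum_range_succ, ← Nat.add_assoc]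
      linarith [hrec (n₀ + k)]
  obtain ⟨k, rfl⟩ : ∃ k, n = n₀ + k := ⟨n - n₀, by omega⟩
  have hpart : ∑ i ∈ Finset.range k, d (n₀ + i) ≤ t n₀ := by
    rw [ht]
    have := Summable.sum_le_tsum (Finset.range k) (fun i _ => hd (i + n₀))
      (f := fun i => d (i + n₀)) (by rw [summable_nat_add_iff]; exact hsum)
    calc ∑ i ∈ Finset.range k, d (n₀ + i) = ∑ i ∈ Finset.range k, d (i + n₀) := by
          apply Finset.sum_congr rfl; intro i _; congr 1; omega
      _ ≤ ∑' i, d (i + n₀) := this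
  have htmono : t n₀ ≤ t N := by
    obtain ⟨j, rfl⟩ : ∃ j, n₀ = N + j := ⟨n₀ - N, by omega⟩
    have hsN : Summable (fun k => d (k + N)) := by rw [summable_nat_add_iff]; exact hsum
    have e1 := Summable.sum_add_tsum_nat_add (f := fun k => d (k + N)) j hsN
    have e2 : ∑' i, (fun k => d (k + N)) (i + j) = t (N + j) := by
      rw [ht]; apply tsum_congr; intro i; simp only []; congr 1; omega
    have e3 : ∑ i ∈ Finset.range j, d (i + N) ≥ 0 :=
      Finset.sum_nonneg fun i _ => hd _
    rw [ht]
    simp only [] at e1 e2 ⊢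
    rw [← e1] at *
    linarith [e2]
  rw [Real.dist_eq, sub_zero, abs_of_nonneg (ha _)]
  calc a (n₀ + k) ≤ a n₀ + ∑ i ∈ Finset.range k, d (n₀ + i) := key k
    _ ≤ a n₀ + t n₀ := by linarith
    _ ≤ a n₀ + t N := by linarith
    _ < ε := by linarith

lemma inexact_err {T : ℕ → H → H} {m : ℕ} (e : ℕ → H)
    (hT : ∀ i ∈ Finset.Icc 1 m, IsNonexpansiveOp (T i)) :
    ∀ k i, 1 ≤ i → i + k ≤ m + 1 → ∀ z,
      ‖inexactFrom T e i k z - compFrom T i k z‖ ≤ ∑ j ∈ Finset.Ico i (i+k), ‖e j‖ := by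
  intro k
  induction k with
  | zero => intro i _ _ z; simp [inexactFrom, compFrom]
  | succ k ih =>
    intro i hi him z
    have hTi : IsNonexpansiveOp (T i) := hT i (Finset.mem_Icc.mpr ⟨hi, by omega⟩)
    have hrec := ih (i+1) (by omega) (by omega) z
    have e1 : inexactFrom T e i (k+1) z - compFrom T i (k+1) z
        = (T i (inexactFrom T e (i+1) k z) - T i (compFrom T (i+1) k z)) + e i := by
      show T i (inexactFrom T e (i+1) k z) + e i - T i (compFrom T (i+1) k z)
          = (T i (inexactFrom T e (i+1) k z) - T i (compFrom T (i+1) k z)) + e i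
      abel
    rw [e1]
    have hsum : ∑ j ∈ Finset.Ico i (i+(k+1)), ‖e j‖
        = ‖e i‖ + ∑ j ∈ Finset.Ico (i+1) ((i+1)+k), ‖e j‖ := by
      rw [Finset.sum_eq_sum_Ico_succ_bot (by omega)]
      congr 1
      apply Finset.sum_congr _ (fun _ _ => rfl)
      congr 1
      omega
    rw [hsum]
    calc ‖(T i (inexactFrom T e (i+1) k z) - T i (compFrom T (i+1) k z)) + e i‖
        ≤ ‖T i (inexactFrom T e (i+1) k z) - T i (compFrom T (i+1) k z)‖ + ‖e i‖ :=
          norm_add_le _ _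
      _ ≤ ‖inexactFrom T e (i+1) k z - compFrom T (i+1) k z‖ + ‖e i‖ := by
          linarith [hTi (inexactFrom T e (i+1) k z) (compFrom T (i+1) k z)]
      _ ≤ ‖e i‖ + ∑ j ∈ Finset.Ico (i+1) ((i+1)+k), ‖e j‖ := by linarith

lemma ultra_lim_exists (U : Ultrafilter ℕ) (t : ℕ → ℝ) (B : ℝ) (hB : ∀ n, |t n| ≤ B) :
    ∃ a : ℝ, |a| ≤ B ∧ Tendsto t ↑U (nhds a) := by
  have hc : IsCompact (Set.Icc (-B) B) := isCompact_Icc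
  have hle : ↑(U.map t) ≤ Filter.principal (Set.Icc (-B) B) := by
    rw [Ultrafilter.coe_map, Filter.le_principal_iff, Filter.mem_map]
    exact Filter.univ_mem' fun n => Set.mem_setOf.mpr
      ⟨(abs_le.1 (hB n)).1, (abs_le.1 (hB n)).2⟩
  obtain ⟨a, ha, hconv⟩ := hc.ultrafilter_le_nhds (U.map t) hle
  exact ⟨a, abs_le.mpr ⟨ha.1, ha.2⟩, hconv⟩

lemma exists_ultra_weaklim (U : Ultrafilter ℕ) (z : ℕ → H) (B : ℝ) (hB : ∀ n, ‖z n‖ ≤ B) :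
    ∃ w : H, ∀ y : H, Tendsto (fun n => ⟪z n, y⟫) ↑U (nhds ⟪w, y⟫) := by
  have hB0 : 0 ≤ B := le_trans (norm_nonneg _) (hB 0)
  have hbound : ∀ y : H, ∀ n, |⟪z n, y⟫| ≤ B * ‖y‖ := by
    intro y n
    calc |⟪z n, y⟫| ≤ ‖z n‖ * ‖y‖ := abs_real_inner_le_norm _ _
      _ ≤ B * ‖y‖ := mul_le_mul_of_nonneg_right (hB n) (norm_nonneg _)
  have hex : ∀ y : H, ∃ a : ℝ, |a| ≤ B * ‖y‖ ∧ Tendsto (fun n => ⟪z n, y⟫) ↑U (nhds a) :=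
    fun y => ultra_lim_exists U _ _ (hbound y)
  choose L hLb hLt using hex
  have hadd : ∀ y₁ y₂, L (y₁ + y₂) = L y₁ + L y₂ := by
    intro y₁ y₂
    have h1 : Tendsto (fun n => ⟪z n, y₁ + y₂⟫) ↑U (nhds (L y₁ + L y₂)) := by
      simp only [inner_add_right]
      exact (hLt y₁).add (hLt y₂)
    exact tendsto_nhds_unique (hLt (y₁ + y₂)) h1
  have hsmul : ∀ (r : ℝ) y, L (r • y) = r * L y := by
    intro r y
    have h1 : Tendsto (fun n => ⟪z n, r • y⟫) ↑U (nhds (r * L y)) := by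
      simp only [real_inner_smul_right]
      exact (hLt y).const_mul r
    exact tendsto_nhds_unique (hLt (r • y)) h1
  let Lfun : H →ₗ[ℝ] ℝ :=
    { toFun := L, map_add' := hadd, map_smul' := hsmul }
  let Lcont : H →L[ℝ] ℝ := LinearMap.mkContinuous Lfun B (fun y => by
    rw [Real.norm_eq_abs]
    exact hLb y)
  refine ⟨(InnerProductSpace.toDual ℝ H).symm Lcont, fun y => ?_⟩
  have hdual := InnerProductSpace.toDual_symm_apply (𝕜 := ℝ) (E := H) (x := y) (y := Lcont)
  rw [hdual]
  exact hLt y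

lemma summable_finset_sum' {s : Finset ℕ} {f : ℕ → ℕ → ℝ} (h : ∀ i ∈ s, Summable (f i)) :
    Summable (fun n => ∑ i ∈ s, f i n) := by
  classical
  induction s using Finset.induction with
  | empty => simpa using summable_zero
  | insert i s2 hx ih =>
      simp only [Finset.sum_insert hx]
      exact ((h i (Finset.mem_insert_self i s2)).add
        (ih fun j hj => h j (Finset.mem_insert_of_mem hj)))
theorem statement0
    (m : ℕ) (hm : 1 ≤ m)
    (αi : ℕ → ℝ) (T : ℕ → H → H) (e : ℕ → ℕ → H)
    (hαi : ∀ i ∈ Finset.Icc 1 m, αi i ∈ Set.Ioo (0 : ℝ) 1)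
    (hT : ∀ i ∈ Finset.Icc 1 m, IsAveragedOp (αi i) (T i))
    (M α : ℝ)
    (hM1 : ∀ i ∈ Finset.Icc 1 m, αi i ≤ M)
    (hM2 : ∃ i ∈ Finset.Icc 1 m, αi i = M)
    (hα : α = (m : ℝ) * M / (1 + ((m : ℝ) - 1) * M))
    (lam : ℕ → ℝ) (hlam : ∀ n, lam n ∈ Set.Ioo (0 : ℝ) (1 / α))
    (hfix : ∃ x : H, compFrom T 1 m x = x)
    (hdiv : ¬ Summable (fun n => lam n * (1 - α * lam n)))
    (herr : ∀ i ∈ Finset.Icc 1 m, Summable (fun n => lam n * ‖e i n‖))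
    (z : ℕ → H)
    (hz : ∀ n, z (n + 1) = z n + lam n • (inexactFrom T (fun i => e i n) 1 m (z n) - z n)) :
    ∃ zbar : H, compFrom T 1 m zbar = zbar ∧ WeakLim z zbar := by
  classical
  obtain ⟨i₀, hi₀, hMi₀⟩ := hM2
  have hM : M ∈ Set.Ioo (0:ℝ) 1 := hMi₀ ▸ hαi i₀ hi₀
  have hαm : α ∈ Set.Ioo (0:ℝ) 1 := by rw [hα]; exact phi_mem hM hm
  have hα0 : (0:ℝ) < α := hαm.1
  have hα1 : α < 1 := hαm.2
  have hTM : ∀ i ∈ Finset.Icc 1 m, AvgIneq M (T i) := fun i hi =>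
    avgIneq_mono (hαi i hi).1 (hM1 i hi) hM.2 (avgIneq_of_avg (hαi i hi) (hT i hi))
  have hTne : ∀ i ∈ Finset.Icc 1 m, IsNonexpansiveOp (T i) := fun i hi =>
    nonexpansive_of_avgIneq hM (hTM i hi)
  set S : H → H := compFrom T 1 m with hSdef
  have hS : AvgIneq α S := by
    rw [hα]; exact avgIneq_compFrom hM hTM m hm 1 le_rfl (by omega)
  obtain ⟨R, hR, hSR⟩ := avg_of_avgIneq hαm hS
  have hfixR : ∀ x : H, S x = x ↔ R x = x := by
    intro x
    constructor
    · intro h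
      have hsub : S x - x = α • (R x - x) := by rw [hSR x]; module
      have h2 : α • (R x - x) = 0 := by rw [← hsub, h, sub_self]
      rcases smul_eq_zero.1 h2 with h3 | h3
      · exact absurd h3 hα0.ne'
      · exact sub_eq_zero.1 h3
    · intro h; rw [hSR x, h]; module
  obtain ⟨x₀, hx₀⟩ := hfix
  have hRx₀ : R x₀ = x₀ := (hfixR x₀).1 hx₀
  have hlam0 : ∀ n, 0 < lam n := fun n => (hlam n).1
  -- errors
  set ε : ℕ → H := fun n => inexactFrom T (fun i => e i n) 1 m (z n) - S (z n) with hεdef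
  set c : ℕ → ℝ := fun n => lam n * ‖ε n‖ with hcdef
  have hc0 : ∀ n, 0 ≤ c n := fun n => mul_nonneg (hlam0 n).le (norm_nonneg _)
  have hεle : ∀ n, ‖ε n‖ ≤ ∑ i ∈ Finset.Icc 1 m, ‖e i n‖ := by
    intro n
    have h1 := inexact_err (fun i => e i n) hTne m 1 le_rfl (by omega) (z n)
    have h2 : Finset.Ico 1 (1+m) = Finset.Icc 1 m := by
      rw [Nat.add_comm, Finset.Ico_add_one_right_eq_Icc]
    rw [h2] at h1
    rw [hεdef]
    exact h1
  have hcle : ∀ n, c n ≤ ∑ i ∈ Finset.Icc 1 m, lam n * ‖e i n‖ := by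
    intro n
    rw [hcdef]
    simp only [← Finset.mul_sum]
    exact mul_le_mul_of_nonneg_left (hεle n) (hlam0 n).le
  have hcsum : Summable c := by
    refine Summable.of_nonneg_of_le hc0 hcle (summable_finset_sum' ?_)
    intro i hi
    exact herr i hi
  set C := ∑' n, c n with hCdef
  have hcC : ∀ n, c n ≤ C := fun n => Summable.le_tsum hcsum n (fun k _ => hc0 k)
  have hC0 : 0 ≤ C := le_trans (hc0 0) (hcC 0)
  -- step sizes
  set μ : ℕ → ℝ := fun n => α * lam n with hμdef
  have hμ0 : ∀ n, 0 < μ n := fun n => mul_pos hα0 (hlam0 n)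
  have hμ1 : ∀ n, μ n < 1 := by
    intro n
    have h1 := (lt_div_iff₀ hα0).1 (hlam n).2
    rw [hμdef]
    simp only []
    linarith [mul_comm α (lam n), h1]
  set p : ℕ → H := fun n => z n + (μ n) • (R (z n) - z n) with hpdef
  have hstep : ∀ n, z (n+1) = p n + lam n • ε n := by
    intro n
    rw [hz n]
    have h1 : inexactFrom T (fun i => e i n) 1 m (z n) = S (z n) + ε n := by
      rw [hεdef]; simp only []; module
    rw [h1, hSR (z n), hpdef, hμdef]
    simp only []
    module
  -- Fejér monotonicity
  have hpcon : ∀ x : H, R x = x → ∀ n, ‖p n - x‖ ≤ ‖z n - x‖ := by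
    intro x hx n
    have h1 : p n - x = (1 - μ n) • (z n - x) + μ n • (R (z n) - R x) := by
      rw [hpdef, hx]; simp only []; module
    calc ‖p n - x‖ = ‖(1-μ n) • (z n - x) + μ n • (R (z n) - R x)‖ := by rw [h1]
      _ ≤ ‖(1-μ n) • (z n - x)‖ + ‖μ n • (R (z n) - R x)‖ := norm_add_le _ _
      _ = (1-μ n)*‖z n - x‖ + μ n*‖R (z n) - R x‖ := by
          rw [norm_smul, norm_smul, Real.norm_eq_abs, Real.norm_eq_abs,
            abs_of_nonneg (by linarith [hμ1 n]), abs_of_nonneg (hμ0 n).le]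
      _ ≤ (1-μ n)*‖z n - x‖ + μ n*‖z n - x‖ := by
          nlinarith [hR (z n) x, hμ0 n]
      _ = ‖z n - x‖ := by ring
  have hrecx : ∀ x : H, R x = x → ∀ n, ‖z (n+1) - x‖ ≤ ‖z n - x‖ + c n := by
    intro x hx n
    rw [hstep n]
    have h2 : p n + lam n • ε n - x = (p n - x) + lam n • ε n := by abel
    rw [h2]
    calc ‖(p n - x) + lam n • ε n‖ ≤ ‖p n - x‖ + ‖lam n • ε n‖ := norm_add_le _ _
      _ ≤ ‖z n - x‖ + c n := by
          rw [norm_smul, Real.norm_eq_abs, abs_of_nonneg (hlam0 n).le, hcdef]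
          simp only []
          linarith [hpcon x hx n]
  set B := ‖z 0 - x₀‖ + C with hBdef
  have hzb : ∀ n, ‖z n - x₀‖ ≤ B := by
    intro n
    have h1 := bound_of_quasiFejer (b := fun n => ‖z n - x₀‖) hc0 hcsum (hrecx x₀ hRx₀) n
    rw [hBdef, hCdef]
    exact h1
  have hB0 : 0 ≤ B := le_trans (norm_nonneg _) (hzb 0)
  have hzB : ∀ n, ‖z n‖ ≤ B + ‖x₀‖ := by
    intro n
    calc ‖z n‖ = ‖(z n - x₀) + x₀‖ := by congr 1; abel
      _ ≤ ‖z n - x₀‖ + ‖x₀‖ := norm_add_le _ _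
      _ ≤ B + ‖x₀‖ := by linarith [hzb n]
  -- descent inequality
  set a : ℕ → ℝ := fun n => ‖R (z n) - z n‖ with hadef
  have ha0 : ∀ n, 0 ≤ a n := fun n => norm_nonneg _
  have hdescent : ∀ n, μ n * (1 - μ n) * a n^2
      ≤ ‖z n - x₀‖^2 - ‖z (n+1) - x₀‖^2 + (2*B + C)*c n := by
    intro n
    have hid : ‖p n - x₀‖^2 = (1-μ n)*‖z n - x₀‖^2 + μ n*‖R (z n) - x₀‖^2
        - μ n*(1-μ n)*‖(z n - x₀) - (R (z n) - x₀)‖^2 := by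
      have h1 : p n - x₀ = (z n - x₀) + μ n • ((R (z n) - x₀) - (z n - x₀)) := by
        rw [hpdef]; simp only []; module
      rw [h1]; exact normsq_combo (μ n) _ _
    have hRle : ‖R (z n) - x₀‖ ≤ ‖z n - x₀‖ := by
      have h1 := hR (z n) x₀
      rw [hRx₀] at h1
      exact h1
    have hsubnorm : ‖(z n - x₀) - (R (z n) - x₀)‖ = a n := by
      have h1 : (z n - x₀) - (R (z n) - x₀) = -(R (z n) - z n) := by abel
      rw [h1, norm_neg, hadef]
    rw [hsubnorm] at hid
    have hpa : ‖p n - x₀‖^2 ≤ ‖z n - x₀‖^2 - μ n*(1-μ n)*a n^2 := by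
      rw [hid]
      have hY2 : ‖R (z n) - x₀‖^2 ≤ ‖z n - x₀‖^2 := by
        nlinarith [norm_nonneg (R (z n) - x₀), norm_nonneg (z n - x₀)]
      nlinarith [mul_le_mul_of_nonneg_left hY2 (hμ0 n).le]
    have hz1 : ‖z (n+1) - x₀‖ ≤ ‖p n - x₀‖ + c n := by
      rw [hstep n]
      have h2 : p n + lam n • ε n - x₀ = (p n - x₀) + lam n • ε n := by abel
      rw [h2]
      calc ‖(p n - x₀) + lam n • ε n‖ ≤ ‖p n - x₀‖ + ‖lam n • ε n‖ := norm_add_le _ _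
        _ ≤ ‖p n - x₀‖ + c n := by
            rw [norm_smul, Real.norm_eq_abs, abs_of_nonneg (hlam0 n).le, hcdef]
    have hpB : ‖p n - x₀‖ ≤ B := le_trans (hpcon x₀ hRx₀ n) (hzb n)
    have h2 : ‖z (n+1) - x₀‖^2 ≤ ‖p n - x₀‖^2 + (2*B + C)*c n := by
      nlinarith [hc0 n, hcC n, norm_nonneg (z (n+1) - x₀), norm_nonneg (p n - x₀), hpB, hz1]
    linarith [hpa, h2]
  have hwsum : Summable (fun n => μ n * (1-μ n) * a n^2) := by
    apply summable_of_sum_range_le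
      (fun n => mul_nonneg (mul_nonneg (hμ0 n).le
        (by linarith [hμ1 n] : (0:ℝ) ≤ 1 - μ n)) (sq_nonneg (a n)))
    intro n
    have key : ∀ k, ∑ i ∈ Finset.range k, μ i*(1-μ i)*a i^2
        ≤ ‖z 0 - x₀‖^2 - ‖z k - x₀‖^2 + (2*B+C)*(∑ i ∈ Finset.range k, c i) := by
      intro k
      induction k with
      | zero => simp
      | succ k ih =>
        rw [Finset.sum_range_succ, Finset.sum_range_succ, mul_add]
        linarith [hdescent k]
    have hpart : ∑ i ∈ Finset.range n, c i ≤ C := by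
      rw [hCdef]
      exact Summable.sum_le_tsum (Finset.range n) (fun i _ => hc0 i) hcsum
    have h3 := mul_le_mul_of_nonneg_left hpart (by linarith : (0:ℝ) ≤ 2*B+C)
    calc ∑ i ∈ Finset.range n, μ i*(1-μ i)*a i^2
        ≤ ‖z 0 - x₀‖^2 - ‖z n - x₀‖^2 + (2*B+C)*(∑ i ∈ Finset.range n, c i) := key n
      _ ≤ ‖z 0 - x₀‖^2 + (2*B+C)*C := by
          nlinarith [norm_nonneg (z n - x₀), sq_nonneg ‖z n - x₀‖]
  have hwdiv : ¬ Summable (fun n => μ n * (1-μ n)) := by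
    intro hcon
    apply hdiv
    have h2 := hcon.mul_left (1/α)
    have h3 : (fun n => 1/α * (μ n * (1-μ n))) = fun n => lam n * (1 - α*lam n) := by
      funext n
      rw [hμdef]
      simp only []
      field_simp
    rw [h3] at h2
    exact h2
  have hfreq : ∀ δ > (0:ℝ), ∀ N, ∃ n ≥ N, a n < δ := by
    intro δ hδ N
    obtain ⟨n, hn, h2⟩ := freq_small (w := fun n => μ n*(1-μ n)) (s := fun n => a n^2)
      (fun n => mul_nonneg (hμ0 n).le (by linarith [hμ1 n])) (fun n => sq_nonneg _) hwdiv hwsum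
      (δ^2) (by positivity) N
    exact ⟨n, hn, lt_of_pow_lt_pow_left₀ 2 hδ.le h2⟩
  -- a tends to zero
  have harec : ∀ n, a (n+1) ≤ a n + 2*c n := by
    intro n
    have hid2 : R (z (n+1)) - z (n+1)
        = (R (z (n+1)) - R (z n)) + (1-μ n) • (R (z n) - z n) - lam n • ε n := by
      rw [hstep n, hpdef]; simp only []; module
    have h1 : ‖R (z (n+1)) - R (z n)‖ ≤ ‖z (n+1) - z n‖ := hR _ _
    have h2 : ‖z (n+1) - z n‖ ≤ μ n * a n + c n := by
      rw [hstep n, hpdef]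
      simp only []
      have h3 : z n + μ n • (R (z n) - z n) + lam n • ε n - z n
          = μ n • (R (z n) - z n) + lam n • ε n := by abel
      rw [h3]
      calc ‖μ n • (R (z n) - z n) + lam n • ε n‖
          ≤ ‖μ n • (R (z n) - z n)‖ + ‖lam n • ε n‖ := norm_add_le _ _
        _ = μ n * a n + c n := by
            rw [norm_smul, norm_smul, Real.norm_eq_abs, Real.norm_eq_abs,
              abs_of_nonneg (hμ0 n).le, abs_of_nonneg (hlam0 n).le, hadef, hcdef]
    have h4 : a (n+1) ≤ ‖R (z (n+1)) - R (z n)‖ + ‖(1-μ n) • (R (z n) - z n)‖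
        + ‖lam n • ε n‖ := by
      rw [hadef]
      simp only []
      rw [hid2]
      calc ‖(R (z (n+1)) - R (z n)) + (1-μ n) • (R (z n) - z n) - lam n • ε n‖
          ≤ ‖(R (z (n+1)) - R (z n)) + (1-μ n) • (R (z n) - z n)‖ + ‖lam n • ε n‖ :=
            norm_sub_le _ _
        _ ≤ ‖R (z (n+1)) - R (z n)‖ + ‖(1-μ n) • (R (z n) - z n)‖ + ‖lam n • ε n‖ := by
            linarith [norm_add_le (R (z (n+1)) - R (z n)) ((1-μ n) • (R (z n) - z n))]
    have h5 : ‖(1-μ n) • (R (z n) - z n)‖ = (1-μ n) * a n := by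
      rw [norm_smul, Real.norm_eq_abs, abs_of_nonneg (by linarith [hμ1 n]), hadef]
    have h6 : ‖lam n • ε n‖ = c n := by
      rw [norm_smul, Real.norm_eq_abs, abs_of_nonneg (hlam0 n).le, hcdef]
    nlinarith [hμ0 n, hμ1 n, ha0 n, h1, h2, h4, h5, h6]
  have haz : Tendsto a atTop (nhds 0) :=
    tendsto_zero_of_freq (d := fun n => 2*c n) ha0 (fun n => by linarith [hc0 n])
      (hcsum.mul_left 2) harec hfreq
  -- convergence of distances to fixed points
  have hconv : ∀ x : H, R x = x → ∃ l, Tendsto (fun n => ‖z n - x‖) atTop (nhds l) :=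
    fun x hx => quasiFejer_converges (b := fun n => ‖z n - x‖) (fun n => norm_nonneg _)
      hc0 hcsum (hrecx x hx)
  -- demiclosedness along ultrafilters
  have hKz : ∀ wv : H, ∀ n, ‖z n - wv‖ ≤ B + ‖x₀‖ + ‖wv‖ := by
    intro wv n
    calc ‖z n - wv‖ ≤ ‖z n‖ + ‖wv‖ := norm_sub_le _ _
      _ ≤ B + ‖x₀‖ + ‖wv‖ := by linarith [hzB n]
  have hdemi : ∀ (V : Ultrafilter ℕ), ↑V ≤ (atTop : Filter ℕ) → ∀ wv : H,
      (∀ y : H, Tendsto (fun n => ⟪z n, y⟫) ↑V (nhds ⟪wv, y⟫)) → R wv = wv := by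
    intro V hV wv hwv
    set q := wv - R wv with hqdef
    set K := B + ‖x₀‖ + ‖wv‖ with hKdef
    have hkey : ∀ n, 2*(⟪z n, q⟫ - ⟪wv, q⟫) + ‖q‖^2 ≤ 2*(a n)*K + a n^2 := by
      intro n
      have h1 : ‖z n - R wv‖ ≤ a n + ‖z n - wv‖ := by
        have hsplit : z n - R wv = (z n - R (z n)) + (R (z n) - R wv) := by abel
        have htri : ‖z n - R wv‖ ≤ ‖z n - R (z n)‖ + ‖R (z n) - R wv‖ := by
          rw [hsplit]; exact norm_add_le _ _
        have hrn : ‖z n - R (z n)‖ = a n := by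
          rw [hadef]; simp only []; rw [norm_sub_rev]
        linarith [hR (z n) wv, htri, hrn.le, hrn.ge]
      have h2 : ‖z n - R wv‖^2 = ‖z n - wv‖^2 + 2*(⟪z n, q⟫ - ⟪wv, q⟫) + ‖q‖^2 := by
        have hd : z n - R wv = (z n - wv) + q := by rw [hqdef]; abel
        rw [hd, norm_add_sq_real, inner_sub_left]
      have h3 : ‖z n - wv‖ ≤ K := hKz wv n
      nlinarith [ha0 n, norm_nonneg (z n - R wv), norm_nonneg (z n - wv), h1, h2, h3,
        mul_le_mul_of_nonneg_left h3 (ha0 n)]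
    have hL : Tendsto (fun n => 2*(⟪z n, q⟫ - ⟪wv, q⟫) + ‖q‖^2) ↑V
        (nhds (2*(⟪wv, q⟫ - ⟪wv, q⟫) + ‖q‖^2)) := by
      apply Tendsto.add _ tendsto_const_nhds
      exact ((hwv q).sub tendsto_const_nhds).const_mul 2
    have haV : Tendsto a ↑V (nhds 0) := haz.mono_left hV
    have hRt : Tendsto (fun n => 2*(a n)*K + a n^2) ↑V (nhds (2*0*K + 0^2)) := by
      apply Tendsto.add
      · exact (haV.const_mul 2).mul_const K
      · exact haV.pow 2
    have hq2 : ‖q‖^2 ≤ 0 := by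
      have h7 := le_of_tendsto_of_tendsto' hL hRt hkey
      simp only [sub_self, mul_zero, zero_add] at h7
      nlinarith [h7]
    have hq0 : q = 0 := by
      have h8 : ‖q‖ = 0 := by nlinarith [norm_nonneg q]
      exact norm_eq_zero.1 h8
    rw [hqdef] at hq0
    exact (sub_eq_zero.1 hq0).symm
  -- build the weak limit
  obtain ⟨U, hU⟩ := Filter.exists_ultrafilter_le (atTop : Filter ℕ)
  obtain ⟨w, hw⟩ := exists_ultra_weaklim U z (B + ‖x₀‖) hzB
  have hRw : R w = w := hdemi U hU w hw
  refine ⟨w, (hfixR w).2 hRw, ?_⟩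
  intro y
  by_contra hcon
  rw [Metric.tendsto_atTop] at hcon
  push_neg at hcon
  obtain ⟨δ, hδ, hfr⟩ := hcon
  have hneBot : (atTop ⊓ Filter.principal {n | δ ≤ dist (⟪z n, y⟫) ⟪w, y⟫}).NeBot := by
    have hfreq2 : ∃ᶠ n in atTop, δ ≤ dist (⟪z n, y⟫) ⟪w, y⟫ :=
      frequently_atTop.2 (fun N => (hfr N).imp fun n h => ⟨h.1, h.2⟩)
    exact Filter.frequently_iff_neBot.1 hfreq2
  obtain ⟨V, hVle⟩ := Filter.exists_ultrafilter_le _ (h := hneBot)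
  have hVtop : ↑V ≤ (atTop : Filter ℕ) := hVle.trans inf_le_left
  obtain ⟨w', hw'⟩ := exists_ultra_weaklim V z (B + ‖x₀‖) hzB
  have hRw' : R w' = w' := hdemi V hVtop w' hw'
  have hdist : δ ≤ dist ⟪w', y⟫ ⟪w, y⟫ := by
    have hmem : {n | δ ≤ dist (⟪z n, y⟫) ⟪w, y⟫} ∈ (V : Filter ℕ) :=
      Filter.le_principal_iff.1 (hVle.trans inf_le_right)
    have hdt : Tendsto (fun n => dist (⟪z n, y⟫) ⟪w, y⟫) ↑V
        (nhds (dist ⟪w', y⟫ ⟪w, y⟫)) := (hw' y).dist tendsto_const_nhds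
    exact ge_of_tendsto hdt hmem
  obtain ⟨l1, hl1⟩ := hconv w hRw
  obtain ⟨l2, hl2⟩ := hconv w' hRw'
  have hh : Tendsto (fun n => ⟪z n, w - w'⟫) atTop
      (nhds ((l2^2 - l1^2 - ‖w'‖^2 + ‖w‖^2)/2)) := by
    have hident : ∀ n, ⟪z n, w - w'⟫
        = (‖z n - w'‖^2 - ‖z n - w‖^2 - ‖w'‖^2 + ‖w‖^2)/2 := by
      intro n
      have e1 : ‖z n - w'‖^2 = ‖z n‖^2 - 2*⟪z n, w'⟫ + ‖w'‖^2 := norm_sub_sq_real _ _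
      have e2 : ‖z n - w‖^2 = ‖z n‖^2 - 2*⟪z n, w⟫ + ‖w‖^2 := norm_sub_sq_real _ _
      have e3 : ⟪z n, w - w'⟫ = ⟪z n, w⟫ - ⟪z n, w'⟫ := inner_sub_right _ _ _
      rw [e3]; rw [e1, e2]; ring
    simp only [hident]
    have h1 : Tendsto (fun n => ‖z n - w'‖^2) atTop (nhds (l2^2)) := hl2.pow 2
    have h2 : Tendsto (fun n => ‖z n - w‖^2) atTop (nhds (l1^2)) := hl1.pow 2
    exact (((h1.sub h2).sub_const (‖w'‖^2)).add_const (‖w‖^2)).div_const 2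
  have hUl : ⟪w, w - w'⟫ = (l2^2 - l1^2 - ‖w'‖^2 + ‖w‖^2)/2 :=
    tendsto_nhds_unique (hw (w - w')) (hh.mono_left hU)
  have hVl : ⟪w', w - w'⟫ = (l2^2 - l1^2 - ‖w'‖^2 + ‖w‖^2)/2 :=
    tendsto_nhds_unique (hw' (w - w')) (hh.mono_left hVtop)
  have hww' : w = w' := by
    have hz0 : ⟪w - w', w - w'⟫ = 0 := by
      rw [inner_sub_left]
      rw [hUl, hVl]
      ring
    have := inner_self_eq_zero.1 hz0
    exact sub_eq_zero.1 this
  rw [hww'] at hdist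
  simp only [dist_self] at hdist
  linarith
end

section
/- Let H be a real Hilbert space, let m ≥ 1, and for each i ∈ {1,…,m} let α_i ∈ (0,1), let T_i : H → H be α_i-averaged, and let (e_{i,n})_{n∈ℕ} be a sequence in H. Set α = m·max{α_1,…,α_m}/(1+(m−1)·max{α_1,…,α_m}), let (λ_n)_{n∈ℕ} be a sequence in (0, 1/α), suppose Fix(T_1∘⋯∘T_m) ≠ ∅, suppose Σ_{n∈ℕ} λ_n(1−αλ_n) = +∞ and Σ_{n∈ℕ} λ_n‖e_{i,n}‖ < +∞ for every i, let z_0 ∈ H and define z_{n+1} = z_n + λ_n( T_1(T_2(⋯T_{m−1}(T_m z_n + e_{m,n}) + e_{m−1,n}⋯) + e_{2,n}) + e_{1,n} − z_n ). Then Σ_{n∈ℕ} λ_n(1−αλ_n) ‖(T_1∘⋯∘T_m) z_n − z_n‖² < +∞. -/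
open Filter Topology
open scoped RealInnerProductSpace

variable {H : Type*} [NormedAddCommGroup H] [InnerProductSpace ℝ H] [CompleteSpace H]

set_option linter.unusedSectionVars false
set_option linter.unusedVariables false
set_option maxHeartbeats 1000000

lemma sq_expand (a b : ℝ) (u v : H) :
    ‖a • u + b • v‖ ^ 2 = a ^ 2 * ‖u‖ ^ 2 + 2 * (a * b) * ⟪u, v⟫ + b ^ 2 * ‖v‖ ^ 2 := by
  rw [norm_add_sq_real, real_inner_smul_left, real_inner_smul_right, norm_smul, norm_smul,
    mul_pow, mul_pow]
  simp [Real.norm_eq_abs, sq_abs]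
  ring

lemma averaged_nonexpansive {β : ℝ} {T : H → H} (hβ0 : 0 < β) (hβ1 : β ≤ 1)
    (hT : IsAveragedOp β T) : IsNonexpansiveOp T := by
  obtain ⟨R, hR, hTR⟩ := hT
  intro x y
  have h : T x - T y = (1 - β) • (x - y) + β • (R x - R y) := by
    rw [hTR, hTR]; module
  rw [h]
  calc ‖(1 - β) • (x - y) + β • (R x - R y)‖
      ≤ ‖(1 - β) • (x - y)‖ + ‖β • (R x - R y)‖ := norm_add_le _ _
    _ = (1 - β) * ‖x - y‖ + β * ‖R x - R y‖ := by
        rw [norm_smul, norm_smul, Real.norm_eq_abs, Real.norm_eq_abs,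
          abs_of_nonneg (by linarith), abs_of_nonneg hβ0.le]
    _ ≤ (1 - β) * ‖x - y‖ + β * ‖x - y‖ := by
        have := hR x y; nlinarith
    _ = ‖x - y‖ := by ring

lemma avg_key {β M : ℝ} {T : H → H} (hβ0 : 0 < β) (hβM : β ≤ M) (hM1 : M < 1)
    (hT : IsAveragedOp β T) (x y : H) :
    M * ‖T x - T y‖ ^ 2 + (1 - M) * ‖(x - T x) - (y - T y)‖ ^ 2 ≤ M * ‖x - y‖ ^ 2 := by
  obtain ⟨R, hR, hTR⟩ := hT
  have hv : ‖R x - R y‖ ≤ ‖x - y‖ := hR x y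
  have hAB : ‖R x - R y‖ ^ 2 ≤ ‖x - y‖ ^ 2 := by nlinarith [norm_nonneg (R x - R y)]
  have h1 : T x - T y = (1 - β) • (x - y) + β • (R x - R y) := by rw [hTR, hTR]; module
  have h2 : (x - T x) - (y - T y) = β • (x - y) + (-β) • (R x - R y) := by
    rw [hTR, hTR]; module
  rw [h1, h2, sq_expand, sq_expand]
  have hC : (0:ℝ) ≤ ‖x - y‖ ^ 2 - 2 * ⟪x - y, R x - R y⟫ + ‖R x - R y‖ ^ 2 := by
    have h3 := sq_expand (1:ℝ) (-1) (x - y) (R x - R y)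
    nlinarith [sq_nonneg ‖(1:ℝ) • (x - y) + (-1 : ℝ) • (R x - R y)‖]
  nlinarith [mul_nonneg (mul_nonneg (by linarith : (0:ℝ) ≤ M) hβ0.le)
      (by linarith : (0:ℝ) ≤ ‖x - y‖ ^ 2 - ‖R x - R y‖ ^ 2),
    mul_nonneg (mul_nonneg hβ0.le (by linarith : (0:ℝ) ≤ M - β)) hC]

lemma comp_key (T : ℕ → H → H) (M : ℝ) (hM0 : 0 < M) (hM1 : M < 1) :
    ∀ k : ℕ, 1 ≤ k → ∀ i,
    (∀ j, i ≤ j → j < i + k → ∀ a b, M * ‖T j a - T j b‖ ^ 2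
      + (1 - M) * ‖(a - T j a) - (b - T j b)‖ ^ 2 ≤ M * ‖a - b‖ ^ 2) →
    ∀ x y, (k : ℝ) * M * ‖compFrom T i k x - compFrom T i k y‖ ^ 2
      + (1 - M) * ‖(x - compFrom T i k x) - (y - compFrom T i k y)‖ ^ 2
      ≤ (k : ℝ) * M * ‖x - y‖ ^ 2 := by
  intro k
  induction k with
  | zero => omega
  | succ k ih =>
    intro _ i h x y
    rcases Nat.eq_zero_or_pos k with hk | hk
    · subst hk
      have h1 := h i le_rfl (by omega) x y
      simp only [compFrom, Function.comp_apply, id_eq]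
      push_cast
      simpa using h1
    · -- inductive step
      have hIH := ih hk (i + 1) (fun j hj1 hj2 => h j (by omega) (by omega)) x y
      have hA := h i le_rfl (by omega) (compFrom T (i + 1) k x) (compFrom T (i + 1) k y)
      simp only [compFrom, Function.comp_apply]
      push_cast
      set C := compFrom T (i + 1) k with hC
      set u := (x - C x) - (y - C y) with hu
      set v := (C x - T i (C x)) - (C y - T i (C y)) with hv
      have huv : (x - T i (C x)) - (y - T i (C y)) = u + v := by rw [hu, hv]; abel
      rw [huv]
      have hexp : ‖u + v‖ ^ 2 = ‖u‖ ^ 2 + 2 * ⟪u, v⟫ + ‖v‖ ^ 2 := by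
        have := sq_expand (1 : ℝ) 1 u v; simpa using this
      have hamgm : 2 * (k : ℝ) * ⟪u, v⟫ ≤ ‖u‖ ^ 2 + (k : ℝ) ^ 2 * ‖v‖ ^ 2 := by
        have h0 : (0:ℝ) ≤ ‖(1:ℝ) • u + (-(k:ℝ)) • v‖ ^ 2 := sq_nonneg _
        rw [sq_expand] at h0
        nlinarith
      have hk1 : (1 : ℝ) ≤ (k : ℝ) := by exact_mod_cast hk
      have hkpos : (0 : ℝ) < (k : ℝ) := by linarith
      have goalk : (k : ℝ) * (((k : ℝ) + 1) * M * ‖T i (C x) - T i (C y)‖ ^ 2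
          + (1 - M) * ‖u + v‖ ^ 2) ≤ (k : ℝ) * (((k : ℝ) + 1) * M * ‖x - y‖ ^ 2) := by
        have t1 := mul_le_mul_of_nonneg_left hA
          (by positivity : (0:ℝ) ≤ (k : ℝ) * ((k : ℝ) + 1))
        have t2 := mul_le_mul_of_nonneg_left hIH (by linarith : (0:ℝ) ≤ (k : ℝ) + 1)
        have t3 := mul_le_mul_of_nonneg_left hamgm (by linarith : (0:ℝ) ≤ 1 - M)
        have t4 : (k : ℝ) * (1 - M) * ‖u + v‖ ^ 2
            = (k : ℝ) * (1 - M) * (‖u‖ ^ 2 + 2 * ⟪u, v⟫ + ‖v‖ ^ 2) := by rw [hexp]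
        nlinarith [t1, t2, t3, t4]
      exact le_of_mul_le_mul_left goalk hkpos

lemma err_bound (T : ℕ → H → H) (e : ℕ → H) :
    ∀ k i, (∀ j, i ≤ j → j < i + k → IsNonexpansiveOp (T j)) → ∀ z,
    ‖inexactFrom T e i k z - compFrom T i k z‖ ≤ ∑ j ∈ Finset.Ico i (i + k), ‖e j‖ := by
  intro k
  induction k with
  | zero => intro i _ z; simp [inexactFrom, compFrom]
  | succ k ih =>
    intro i h z
    have hih := ih (i + 1) (fun j hj1 hj2 => h j (by omega) (by omega)) z
    have hne := h i le_rfl (by omega)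
    show ‖(T i (inexactFrom T e (i + 1) k z) + e i) - T i (compFrom T (i + 1) k z)‖ ≤ _
    have hsum : ∑ j ∈ Finset.Ico i (i + (k + 1)), ‖e j‖
        = ‖e i‖ + ∑ j ∈ Finset.Ico (i + 1) (i + 1 + k), ‖e j‖ := by
      rw [show i + (k + 1) = i + 1 + k by omega]
      exact Finset.sum_eq_sum_Ico_succ_bot (by omega) _
    rw [hsum]
    calc ‖(T i (inexactFrom T e (i + 1) k z) + e i) - T i (compFrom T (i + 1) k z)‖
        ≤ ‖T i (inexactFrom T e (i + 1) k z) - T i (compFrom T (i + 1) k z)‖ + ‖e i‖ := by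
          rw [show (T i (inexactFrom T e (i + 1) k z) + e i) - T i (compFrom T (i + 1) k z)
            = (T i (inexactFrom T e (i + 1) k z) - T i (compFrom T (i + 1) k z)) + e i by abel]
          exact norm_add_le _ _
      _ ≤ ‖inexactFrom T e (i + 1) k z - compFrom T (i + 1) k z‖ + ‖e i‖ := by
          have := hne (inexactFrom T e (i + 1) k z) (compFrom T (i + 1) k z); linarith
      _ ≤ (∑ j ∈ Finset.Ico (i + 1) (i + 1 + k), ‖e j‖) + ‖e i‖ := by linarith
      _ = ‖e i‖ + ∑ j ∈ Finset.Ico (i + 1) (i + 1 + k), ‖e j‖ := by ring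

theorem statement1
    (m : ℕ) (hm : 1 ≤ m)
    (αi : ℕ → ℝ) (T : ℕ → H → H) (e : ℕ → ℕ → H)
    (hαi : ∀ i ∈ Finset.Icc 1 m, αi i ∈ Set.Ioo (0 : ℝ) 1)
    (hT : ∀ i ∈ Finset.Icc 1 m, IsAveragedOp (αi i) (T i))
    (M α : ℝ)
    (hM1 : ∀ i ∈ Finset.Icc 1 m, αi i ≤ M)
    (hM2 : ∃ i ∈ Finset.Icc 1 m, αi i = M)
    (hα : α = (m : ℝ) * M / (1 + ((m : ℝ) - 1) * M))
    (lam : ℕ → ℝ) (hlam : ∀ n, lam n ∈ Set.Ioo (0 : ℝ) (1 / α))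
    (hfix : ∃ x : H, compFrom T 1 m x = x)
    (hdiv : ¬ Summable (fun n => lam n * (1 - α * lam n)))
    (herr : ∀ i ∈ Finset.Icc 1 m, Summable (fun n => lam n * ‖e i n‖))
    (z : ℕ → H)
    (hz : ∀ n, z (n + 1) = z n + lam n • (inexactFrom T (fun i => e i n) 1 m (z n) - z n)) :
    Summable (fun n => lam n * (1 - α * lam n) * ‖compFrom T 1 m (z n) - z n‖ ^ 2) := by
  classical
  obtain ⟨x, hx⟩ := hfix
  obtain ⟨i0, hi0, hi0M⟩ := hM2
  have hM0 : 0 < M := hi0M ▸ (hαi i0 hi0).1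
  have hMlt1 : M < 1 := hi0M ▸ (hαi i0 hi0).2
  have hm0 : (0 : ℝ) < (m : ℝ) := by exact_mod_cast hm
  have hm1 : (1 : ℝ) ≤ (m : ℝ) := by exact_mod_cast hm
  have hD : (0 : ℝ) < 1 + ((m : ℝ) - 1) * M := by nlinarith
  have hα0 : 0 < α := by rw [hα]; positivity
  have hα1 : α < 1 := by rw [hα, div_lt_one hD]; nlinarith
  have hαD : α * (1 + ((m : ℝ) - 1) * M) = (m : ℝ) * M := by
    rw [hα]; exact div_mul_cancel₀ _ hD.ne'
  -- per-operator inequalities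
  have hkey : ∀ j, 1 ≤ j → j < 1 + m → ∀ a b, M * ‖T j a - T j b‖ ^ 2
      + (1 - M) * ‖(a - T j a) - (b - T j b)‖ ^ 2 ≤ M * ‖a - b‖ ^ 2 := by
    intro j h1 h2 a b
    have hj : j ∈ Finset.Icc 1 m := Finset.mem_Icc.mpr ⟨h1, by omega⟩
    exact avg_key (hαi j hj).1 (hM1 j hj) hMlt1 (hT j hj) a b
  have hne : ∀ j, 1 ≤ j → j < 1 + m → IsNonexpansiveOp (T j) := by
    intro j h1 h2
    have hj : j ∈ Finset.Icc 1 m := Finset.mem_Icc.mpr ⟨h1, by omega⟩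
    exact averaged_nonexpansive (hαi j hj).1 (hαi j hj).2.le (hT j hj)
  set Q : H → H := compFrom T 1 m with hQ
  set E : ℕ → H := fun n => inexactFrom T (fun i => e i n) 1 m (z n) - Q (z n) with hE
  set ε : ℕ → ℝ := fun n => lam n * ‖E n‖ with hεdef
  have hε0 : ∀ n, 0 ≤ ε n := fun n => mul_nonneg (hlam n).1.le (norm_nonneg _)
  have hεsum : Summable ε := by
    refine Summable.of_nonneg_of_le hε0 ?_ (summable_sum (fun i hi => herr i hi))
    · intro n
      have hb := err_bound T (fun i => e i n) m 1 (fun j h1 h2 => hne j h1 h2) (z n)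
      have hIco : Finset.Ico 1 (1 + m) = Finset.Icc 1 m := by
        rw [add_comm]; exact Finset.Ico_add_one_right_eq_Icc 1 m
      rw [hIco] at hb
      calc ε n = lam n * ‖E n‖ := rfl
        _ ≤ lam n * ∑ i ∈ Finset.Icc 1 m, ‖e i n‖ :=
            mul_le_mul_of_nonneg_left hb (hlam n).1.le
        _ = ∑ i ∈ Finset.Icc 1 m, lam n * ‖e i n‖ := Finset.mul_sum _ _ _
  set c : ℝ := ∑' n, ε n with hc
  have hc0 : 0 ≤ c := tsum_nonneg hε0
  have hεc : ∀ n, ε n ≤ c := fun n => Summable.le_tsum hεsum n (fun k _ => hε0 k)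
  have hpart : ∀ n, ∑ k ∈ Finset.range n, ε k ≤ c :=
    fun n => Summable.sum_le_tsum _ (fun k _ => hε0 k) hεsum
  -- key inner product inequality
  have hI2 : ∀ w : H, 2 * α * ⟪w - x, Q w - w⟫ ≤ -‖Q w - w‖ ^ 2 := by
    intro w
    have h := comp_key T M hM0 hMlt1 m hm 1 hkey w x
    rw [← hQ, hx] at h
    have h1 : ‖Q w - x‖ ^ 2 = ‖w - x‖ ^ 2 + 2 * ⟪w - x, Q w - w⟫ + ‖Q w - w‖ ^ 2 := by
      have h2 : Q w - x = (1 : ℝ) • (w - x) + (1 : ℝ) • (Q w - w) := by module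
      rw [h2, sq_expand]; ring
    have h3 : ‖(w - Q w) - (x - x)‖ ^ 2 = ‖Q w - w‖ ^ 2 := by
      rw [show (w - Q w) - (x - x) = -(Q w - w) by abel, norm_neg]
    rw [h1, h3] at h
    -- h : m*M*(P + 2I + N) + (1-M)*N ≤ m*M*P
    -- hence 2*(m*M)*I ≤ -(1+(m-1)*M)*N ; and m*M = α*(1+(m-1)*M)
    have h4 : 2 * ((m : ℝ) * M) * ⟪w - x, Q w - w⟫
        ≤ -((1 + ((m : ℝ) - 1) * M) * ‖Q w - w‖ ^ 2) := by nlinarith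
    rw [← hαD] at h4
    nlinarith [mul_pos hα0 hD, hD, sq_nonneg ‖Q w - w‖]
  -- per-step inequalities
  set s : ℕ → ℝ := fun n => lam n * (1 - α * lam n) * ‖Q (z n) - z n‖ ^ 2 with hs
  have halam : ∀ n, α * lam n < 1 := by
    intro n
    have := (hlam n).2
    rw [lt_div_iff₀ hα0] at this
    linarith [this]
  have hs0 : ∀ n, 0 ≤ s n := by
    intro n
    have := halam n
    exact mul_nonneg (mul_nonneg (hlam n).1.le (by linarith)) (sq_nonneg _)
  have hzsucc : ∀ n, z (n + 1) - x
      = ((z n + lam n • (Q (z n) - z n)) - x) + lam n • E n := by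
    intro n
    rw [hz n]
    have : inexactFrom T (fun i => e i n) 1 m (z n) = Q (z n) + E n := by
      simp only [hE]; abel
    rw [this]
    module
  have hu2 : ∀ n, ‖(z n + lam n • (Q (z n) - z n)) - x‖ ^ 2 + s n ≤ ‖z n - x‖ ^ 2 := by
    intro n
    set w := z n
    set lmb := lam n with hlmb
    have hlmb0 : 0 ≤ lmb := (hlam n).1.le
    have hexpu : ‖(w + lmb • (Q w - w)) - x‖ ^ 2
        = ‖w - x‖ ^ 2 + 2 * (1 * lmb) * ⟪w - x, Q w - w⟫ + lmb ^ 2 * ‖Q w - w‖ ^ 2 := by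
      rw [show (w + lmb • (Q w - w)) - x = (1 : ℝ) • (w - x) + lmb • (Q w - w) by module,
        sq_expand]
      ring
    have ht1 := mul_le_mul_of_nonneg_left (hI2 w) hlmb0
    have ht2 : 0 ≤ lmb * ‖Q w - w‖ ^ 2 * (1 - α) * (1 - α * lmb) := by
      have := halam n
      apply mul_nonneg (mul_nonneg (mul_nonneg hlmb0 (sq_nonneg _)) (by linarith))
      linarith
    -- multiplied by α version
    have hαmul : α * (‖(w + lmb • (Q w - w)) - x‖ ^ 2 + s n) ≤ α * ‖w - x‖ ^ 2 := by
      have hexpα : α * ‖(w + lmb • (Q w - w)) - x‖ ^ 2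
          = α * (‖w - x‖ ^ 2 + 2 * (1 * lmb) * ⟪w - x, Q w - w⟫
            + lmb ^ 2 * ‖Q w - w‖ ^ 2) := by rw [hexpu]
      have hsn : s n = lmb * (1 - α * lmb) * ‖Q w - w‖ ^ 2 := rfl
      rw [hsn]
      nlinarith [ht1, ht2, hexpα]
    exact le_of_mul_le_mul_left (by linarith [hαmul]) hα0
  have hustep : ∀ n, ‖z (n + 1) - x‖ ≤ ‖(z n + lam n • (Q (z n) - z n)) - x‖ + ε n := by
    intro n
    rw [hzsucc n]
    calc ‖((z n + lam n • (Q (z n) - z n)) - x) + lam n • E n‖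
        ≤ ‖(z n + lam n • (Q (z n) - z n)) - x‖ + ‖lam n • E n‖ := norm_add_le _ _
      _ = ‖(z n + lam n • (Q (z n) - z n)) - x‖ + ε n := by
          rw [norm_smul, Real.norm_eq_abs, abs_of_pos (hlam n).1]
  have huz : ∀ n, ‖(z n + lam n • (Q (z n) - z n)) - x‖ ≤ ‖z n - x‖ := by
    intro n
    have h1 := hu2 n
    have h2 := hs0 n
    nlinarith [norm_nonneg ((z n + lam n • (Q (z n) - z n)) - x), norm_nonneg (z n - x)]
  have hstep : ∀ n, ‖z (n + 1) - x‖ ≤ ‖z n - x‖ + ε n := by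
    intro n; linarith [hustep n, huz n]
  -- boundedness
  have hbd : ∀ n, ‖z n - x‖ ≤ ‖z 0 - x‖ + c := by
    have haux : ∀ n, ‖z n - x‖ ≤ ‖z 0 - x‖ + ∑ k ∈ Finset.range n, ε k := by
      intro n
      induction n with
      | zero => simp
      | succ n ih =>
        rw [Finset.sum_range_succ]
        linarith [hstep n, ih]
    intro n
    linarith [haux n, hpart n]
  set K : ℝ := 2 * (‖z 0 - x‖ + c) + c with hK
  have hK0 : 0 ≤ K := by positivity
  have hstep2 : ∀ n, ‖z (n + 1) - x‖ ^ 2 ≤ ‖z n - x‖ ^ 2 - s n + K * ε n := by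
    intro n
    have h1 := hustep n
    have h2 := hu2 n
    have h3 := huz n
    have h4 := hbd n
    have h5 := hεc n
    have h6 := hε0 n
    have hun : 0 ≤ ‖(z n + lam n • (Q (z n) - z n)) - x‖ := norm_nonneg _
    have hsq : ‖z (n + 1) - x‖ ^ 2
        ≤ (‖(z n + lam n • (Q (z n) - z n)) - x‖ + ε n) ^ 2 := by
      have := norm_nonneg (z (n + 1) - x)
      nlinarith
    nlinarith [hsq]
  -- telescoping
  have htel : ∀ n, ∑ k ∈ Finset.range n, s k + ‖z n - x‖ ^ 2
      ≤ ‖z 0 - x‖ ^ 2 + K * ∑ k ∈ Finset.range n, ε k := by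
    intro n
    induction n with
    | zero => simp
    | succ n ih =>
      rw [Finset.sum_range_succ, Finset.sum_range_succ]
      have := hstep2 n
      nlinarith [this, ih]
  have hfinal : ∀ n, ∑ k ∈ Finset.range n, s k ≤ ‖z 0 - x‖ ^ 2 + K * c := by
    intro n
    have h1 := htel n
    have h2 := hpart n
    nlinarith [sq_nonneg ‖z n - x‖, mul_le_mul_of_nonneg_left h2 hK0]
  exact summable_of_sum_range_le hs0 hfinal
end

section
/- Let H be a real Hilbert space, let V be a closed vector subspace of H with orthogonal projection P_V, let β > 0, let B : H → H satisfy ⟨x − y, Bx − By⟩ ≥ β‖Bx − By‖² for all x, y ∈ V, and let γ ∈ (0, 2β). Then the operator S_γ = Id − γ P_V∘B∘P_V is γ/(2β)-averaged. -/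
open Filter Topology
open scoped RealInnerProductSpace Pointwise

variable {H : Type*} [NormedAddCommGroup H] [InnerProductSpace ℝ H] [CompleteSpace H]

/-- A set-valued operator `A : H → 2^H` is monotone. -/
def IsMonotoneOp (A : H → Set H) : Prop :=
  ∀ x y u v : H, u ∈ A x → v ∈ A y → 0 ≤ ⟪x - y, u - v⟫

/-- A set-valued operator is maximally monotone: it is monotone and its graph is not
properly contained in the graph of any monotone operator. -/
def IsMaxMonotoneOp (A : H → Set H) : Prop :=
  IsMonotoneOp A ∧ ∀ x u : H, (∀ y v : H, v ∈ A y → 0 ≤ ⟪x - y, u - v⟫) → u ∈ A x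

/-- The normal cone to a closed vector subspace `V`: it maps `x ∈ V` to `Vᗮ`
and `x ∉ V` to `∅`. -/
def normalConeSub (V : Submodule ℝ H) : H → Set H :=
  fun x => {w | x ∈ V ∧ w ∈ Vᗮ}

/-- The partial inverse of a set-valued operator `M` with respect to a subspace with
orthogonal projection `P` (so that `P_{V⊥} = id - P`):
`y ∈ M_V x ↔ P_V y + P_{V⊥} x ∈ M (P_V x + P_{V⊥} y)`. -/
def partialInvOp (P : H → H) (M : H → Set H) : H → Set H :=
  fun x => {y | P y + (x - P x) ∈ M (P x + (y - P y))}

theorem statement6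
    (V : Submodule ℝ H) (hV : IsClosed (V : Set H))
    (P : H → H) (hP : ∀ x : H, P x ∈ V ∧ x - P x ∈ Vᗮ)
    (β : ℝ) (hβ : 0 < β)
    (B : H → H)
    (hB : ∀ x ∈ V, ∀ y ∈ V, β * ‖B x - B y‖ ^ 2 ≤ ⟪x - y, B x - B y⟫)
    (γ : ℝ) (hγ : γ ∈ Set.Ioo (0 : ℝ) (2 * β))
    (Sγ : H → H) (hS : ∀ w : H, Sγ w = w - γ • P (B (P w))) :
    IsAveragedOp (γ / (2 * β)) Sγ := by
  haveI : CompleteSpace V := hV.completeSpace_coe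
  set Q : H → H := fun x => (V.orthogonalProjectionOnto x : H) with hQdef
  have hPeq : ∀ x, P x = Q x := by
    intro x
    refine (Submodule.eq_starProjection_of_mem_of_inner_eq_zero (hP x).1 ?_).symm
    intro w hw
    exact ((Submodule.mem_orthogonal' V _).mp (hP x).2) w hw
  -- basic facts about Q
  have hQsub : ∀ u v : H, Q u - Q v = Q (u - v) := by
    intro u v
    simp [hQdef, map_sub]
  have hQmem : ∀ u : H, Q u ∈ V := fun u => (V.orthogonalProjectionOnto u).2
  have hQnorm : ∀ u : H, ‖Q u‖ ≤ ‖u‖ := by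
    intro u
    simpa [hQdef] using Submodule.orthogonalProjectionOnto_norm_le V |>.trans (le_refl 1) |>.trans_eq rfl
      |> fun h => (V.orthogonalProjectionOnto).le_opNorm u |>.trans
        (by nlinarith [norm_nonneg u, (V.orthogonalProjectionOnto).le_opNorm u])
  have hQadj : ∀ u v : H, ⟪Q u, v⟫ = ⟪u, Q v⟫ := fun u v =>
    Submodule.inner_starProjection_left_eq_right V u v
  -- the candidate nonexpansive operator
  set R : H → H := fun x => x - (2 * β) • Q (B (Q x)) with hR
  have key : ∀ x y : H, ‖R x - R y‖ ^ 2 ≤ ‖x - y‖ ^ 2 := by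
    intro x y
    set d : H := B (Q x) - B (Q y) with hd
    have hrw : R x - R y = (x - y) - (2 * β) • Q d := by
      simp only [hR, hd, ← hQsub]
      module
    have hinner : β * ‖d‖ ^ 2 ≤ ⟪x - y, Q d⟫ := by
      have h1 : ⟪x - y, Q d⟫ = ⟪Q x - Q y, d⟫ := by
        rw [← hQadj, hQsub]
      rw [h1]
      exact hB (Q x) (hQmem x) (Q y) (hQmem y)
    have hQd : ‖Q d‖ ≤ ‖d‖ := hQnorm d
    have expand : ‖(x - y) - (2 * β) • Q d‖ ^ 2
        = ‖x - y‖ ^ 2 - 2 * (2 * β) * ⟪x - y, Q d⟫ + (2 * β) ^ 2 * ‖Q d‖ ^ 2 := by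
      rw [norm_sub_sq_real, norm_smul, real_inner_smul_right]
      simp [abs_of_pos hβ, abs_of_pos (by linarith : (0:ℝ) < 2 * β)]
      ring
    rw [hrw, expand]
    nlinarith [mul_le_mul_of_nonneg_left hinner (by positivity : (0:ℝ) ≤ 4 * β), pow_le_pow_left₀ (norm_nonneg (Q d)) hQd 2, sq_nonneg β, hβ.le]
  refine ⟨R, ?_, ?_⟩
  · intro x y
    have := key x y
    exact (pow_le_pow_iff_left₀ (norm_nonneg _) (norm_nonneg _) two_ne_zero).mp this
  · intro x
    have h2β : (2 * β) ≠ 0 := by positivity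
    rw [hS, hPeq, hPeq]
    simp only [hR]
    rw [smul_sub, smul_smul]
    have : γ / (2 * β) * (2 * β) = γ := by field_simp
    rw [this]
    module
end

section
/- Let H be a real Hilbert space, V a closed vector subspace of H, A : H → 2^H maximally monotone, B : H → H β-cocoercive on V for some β > 0, and let γ ∈ (0, 2β). Define T_γ = ½(Id + R_{γA}∘R_{N_V}) and S_γ = Id − γ P_V∘B∘P_V. Then for every x ∈ H, one has 0 ∈ Ax + Bx + N_V x if and only if x ∈ V and there exists y ∈ V⊥ ∩ (Ax + Bx) such that x − γ(y − P_{V⊥}(Bx)) is a fixed point of T_γ∘S_γ. -/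
open Filter Topology
open scoped RealInnerProductSpace Pointwise

variable {H : Type*} [NormedAddCommGroup H] [InnerProductSpace ℝ H] [CompleteSpace H]

theorem statement7
    (V : Submodule ℝ H) (hV : IsClosed (V : Set H))
    (P : H → H) (hP : ∀ x : H, P x ∈ V ∧ x - P x ∈ Vᗮ)
    (A : H → Set H) (hA : IsMaxMonotoneOp A)
    (β : ℝ) (hβ : 0 < β)
    (B : H → H)
    (hB : ∀ x ∈ V, ∀ y ∈ V, β * ‖B x - B y‖ ^ 2 ≤ ⟪x - y, B x - B y⟫)
    (γ : ℝ) (hγ : γ ∈ Set.Ioo (0 : ℝ) (2 * β))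
    (J : H → H) (hJ : ∀ x p : H, J x = p ↔ ∃ u ∈ A p, x - p = γ • u)
    (Tγ : H → H)
    (hT : ∀ w : H, Tγ w =
      (2 : ℝ)⁻¹ • (w + ((2 : ℝ) • J ((2 : ℝ) • P w - w) - ((2 : ℝ) • P w - w))))
    (Sγ : H → H) (hS : ∀ w : H, Sγ w = w - γ • P (B (P w))) :
    ∀ x : H,
      (∃ u ∈ A x, ∃ w ∈ normalConeSub V x, u + B x + w = 0) ↔
      (x ∈ V ∧ ∃ y : H, y ∈ Vᗮ ∧ (∃ u ∈ A x, y = u + B x) ∧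
        Tγ (Sγ (x - γ • (y - (B x - P (B x))))) = x - γ • (y - (B x - P (B x)))) := by

  intro x
  -- uniqueness of the orthogonal decomposition
  have hP0 : ∀ a p : H, p ∈ V → a - p ∈ Vᗮ → P a = p := by
    intro a p hp hap
    have h1 := (hP a).1
    have h2 := (hP a).2
    have hmemV : P a - p ∈ V := sub_mem h1 hp
    have hmemO : P a - p ∈ Vᗮ := by
      have : P a - p = (a - p) - (a - P a) := by abel
      rw [this]; exact sub_mem hap h2
    have : ⟪P a - p, P a - p⟫ = 0 := (Submodule.mem_orthogonal _ _).1 hmemO _ hmemV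
    exact sub_eq_zero.1 (inner_self_eq_zero.1 this)
  constructor
  · rintro ⟨u, huA, w, ⟨hxV, hwO⟩, heq⟩
    refine ⟨hxV, -w, neg_mem hwO, ⟨u, huA, by linear_combination (norm := module) -heq⟩, ?_⟩
    set y : H := -w with hy
    have hyO : y ∈ Vᗮ := neg_mem hwO
    have hyeq : y = u + B x := by linear_combination (norm := module) -heq
    set z : H := x - γ • (y - (B x - P (B x))) with hz
    have hBO : B x - P (B x) ∈ Vᗮ := (hP (B x)).2
    have hPz : P z = x := by
      apply hP0 _ _ hxV
      have : z - x = -(γ • (y - (B x - P (B x)))) := by rw [hz]; abel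
      rw [this]
      exact neg_mem (Submodule.smul_mem _ _ (sub_mem hyO hBO))
    have hs : Sγ z = z - γ • P (B x) := by rw [hS, hPz]
    have hPs : P (Sγ z) = x - γ • P (B x) := by
      apply hP0 _ _ (sub_mem hxV (Submodule.smul_mem _ _ (hP (B x)).1))
      have : Sγ z - (x - γ • P (B x)) = -(γ • (y - (B x - P (B x)))) := by
        rw [hs, hz]; abel
      rw [this]
      exact neg_mem (Submodule.smul_mem _ _ (sub_mem hyO hBO))
    have hJr : J ((2 : ℝ) • P (Sγ z) - Sγ z) = x := by
      rw [hJ]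
      refine ⟨u, huA, ?_⟩
      rw [hPs, hs, hz, hyeq]
      module
    rw [hT, hJr, hPs, hs, hz]
    module
  · rintro ⟨hxV, y, hyO, ⟨u, huA, hyeq⟩, -⟩
    exact ⟨u, huA, -y, ⟨hxV, neg_mem hyO⟩, by rw [hyeq]; abel⟩
end

section
/- Let H be a real Hilbert space, V a closed vector subspace of H, A : H → 2^H maximally monotone, B : H → H β-cocoercive on V for some β > 0, and let γ > 0. Define 𝒜_γ = (γA)_V, the partial inverse of γA with respect to V, and ℬ_γ = γ P_V∘B∘P_V. Then for every x ∈ H, one has 0 ∈ Ax + Bx + N_V x if and only if x ∈ V and there exists y ∈ V⊥ ∩ (Ax + Bx) such that 0 ∈ 𝒜_γ(x + γ(y − P_{V⊥}(Bx))) + ℬ_γ(x + γ(y − P_{V⊥}(Bx))). -/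
open Filter Topology
open scoped RealInnerProductSpace Pointwise

variable {H : Type*} [NormedAddCommGroup H] [InnerProductSpace ℝ H] [CompleteSpace H]

theorem statement11
    (V : Submodule ℝ H) (hV : IsClosed (V : Set H))
    (P : H → H) (hP : ∀ x : H, P x ∈ V ∧ x - P x ∈ Vᗮ)
    (A : H → Set H) (hA : IsMaxMonotoneOp A)
    (β : ℝ) (hβ : 0 < β)
    (B : H → H)
    (hB : ∀ x ∈ V, ∀ y ∈ V, β * ‖B x - B y‖ ^ 2 ≤ ⟪x - y, B x - B y⟫)
    (γ : ℝ) (hγ : 0 < γ) :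
    ∀ x : H,
      (∃ u ∈ A x, ∃ w ∈ normalConeSub V x, u + B x + w = 0) ↔
      (x ∈ V ∧ ∃ y : H, y ∈ Vᗮ ∧ (∃ u ∈ A x, y = u + B x) ∧
        ∃ v ∈ partialInvOp P (fun w => γ • A w) (x + γ • (y - (B x - P (B x)))),
          v + γ • P (B (P (x + γ • (y - (B x - P (B x)))))) = 0) := by
  have orth0 : ∀ a : H, a ∈ V → a ∈ Vᗮ → a = 0 := by
    intro a h1 h2
    have h3 := (Submodule.mem_orthogonal V a).mp h2 a h1
    rwa [inner_self_eq_zero] at h3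
  have key : ∀ a x : H, a ∈ V → x - a ∈ Vᗮ → P x = a := by
    intro a x ha hx
    have h1 := (hP x).1
    have h2 := (hP x).2
    have hd2 : P x - a ∈ Vᗮ := by
      have h3 : P x - a = (x - a) - (x - P x) := by abel
      rw [h3]; exact sub_mem hx h2
    exact sub_eq_zero.mp (orth0 _ (sub_mem h1 ha) hd2)
  intro x
  constructor
  · rintro ⟨u, hu, w, ⟨hxV, hw⟩, heq⟩
    have hPx : P x = x := key x x hxV (by rw [sub_self]; exact zero_mem _)
    have hyw : u + B x = -w := eq_neg_of_add_eq_zero_left heq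
    have hy : u + B x ∈ Vᗮ := hyw ▸ neg_mem hw
    have hBx1 := (hP (B x)).1
    have hBx2 := (hP (B x)).2
    have hzx : (x + γ • ((u + B x) - (B x - P (B x)))) - x ∈ Vᗮ := by
      have h3 : (x + γ • ((u + B x) - (B x - P (B x)))) - x
          = γ • ((u + B x) - (B x - P (B x))) := by abel
      rw [h3]; exact Submodule.smul_mem _ _ (sub_mem hy hBx2)
    have hPz : P (x + γ • ((u + B x) - (B x - P (B x)))) = x := key x _ hxV hzx
    refine ⟨hxV, u + B x, hy, ⟨u, hu, rfl⟩, -(γ • P (B x)), ?_, ?_⟩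
    · have hvV : -(γ • P (B x)) ∈ V := neg_mem (Submodule.smul_mem _ _ hBx1)
      have hPv : P (-(γ • P (B x))) = -(γ • P (B x)) :=
        key _ _ hvV (by rw [sub_self]; exact zero_mem _)
      show P (-(γ • P (B x))) + ((x + γ • ((u + B x) - (B x - P (B x))))
          - P (x + γ • ((u + B x) - (B x - P (B x)))))
        ∈ γ • A (P (x + γ • ((u + B x) - (B x - P (B x))))
          + (-(γ • P (B x)) - P (-(γ • P (B x)))))
      rw [hPv, hPz]
      have h1 : -(γ • P (B x)) + ((x + γ • ((u + B x) - (B x - P (B x)))) - x)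
          = γ • u := by module
      have h2 : x + (-(γ • P (B x)) - -(γ • P (B x))) = x := by abel
      rw [h1, h2]
      exact Set.smul_mem_smul_set hu
    · rw [hPz]
      exact neg_add_cancel _
  · rintro ⟨hxV, y, hy, ⟨u, hu, hyeq⟩, -⟩
    exact ⟨u, hu, -y, ⟨hxV, neg_mem hy⟩, by rw [hyeq]; abel⟩
end

section
/- Let H be a real Hilbert space, V a closed vector subspace of H, A : H → 2^H maximally monotone, B : H → H β-cocoercive on V for some β > 0, let Z denote the set of solutions of 0 ∈ Ax + Bx + N_V x, and let γ ∈ (0, 2β). Define T_γ = ½(Id + R_{γA}∘R_{N_V}), S_γ = Id − γ P_V∘B∘P_V, 𝒜_γ = (γA)_V (the partial inverse of γA with respect to V), and ℬ_γ = γ P_V∘B∘P_V. Then Z = P_V(Fix(T_γ∘S_γ)) = P_V(zer(𝒜_γ + ℬ_γ)) and R_{N_V}(Fix(T_γ∘S_γ)) = zer(𝒜_γ + ℬ_γ), where zer(𝒜_γ + ℬ_γ) = {z ∈ H : 0 ∈ 𝒜_γ z + ℬ_γ z}. -/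
open Filter Topology
open scoped RealInnerProductSpace Pointwise

variable {H : Type*} [NormedAddCommGroup H] [InnerProductSpace ℝ H] [CompleteSpace H]

theorem statement12
    (V : Submodule ℝ H) (hV : IsClosed (V : Set H))
    (P : H → H) (hP : ∀ x : H, P x ∈ V ∧ x - P x ∈ Vᗮ)
    (A : H → Set H) (hA : IsMaxMonotoneOp A)
    (β : ℝ) (hβ : 0 < β)
    (B : H → H)
    (hB : ∀ x ∈ V, ∀ y ∈ V, β * ‖B x - B y‖ ^ 2 ≤ ⟪x - y, B x - B y⟫)
    (γ : ℝ) (hγ : γ ∈ Set.Ioo (0 : ℝ) (2 * β))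
    (J : H → H) (hJ : ∀ x p : H, J x = p ↔ ∃ u ∈ A p, x - p = γ • u)
    (Tγ : H → H)
    (hT : ∀ w : H, Tγ w =
      (2 : ℝ)⁻¹ • (w + ((2 : ℝ) • J ((2 : ℝ) • P w - w) - ((2 : ℝ) • P w - w))))
    (Sγ : H → H) (hS : ∀ w : H, Sγ w = w - γ • P (B (P w)))
    (Z : Set H) (hZ : Z = {x | ∃ u ∈ A x, ∃ w ∈ normalConeSub V x, u + B x + w = 0}) :
    Z = P '' {w | Tγ (Sγ w) = w} ∧
    Z = P '' {w | ∃ v ∈ partialInvOp P (fun w' => γ • A w') w, v + γ • P (B (P w)) = 0} ∧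
    (fun w => (2 : ℝ) • P w - w) '' {w | Tγ (Sγ w) = w} =
      {w | ∃ v ∈ partialInvOp P (fun w' => γ • A w') w, v + γ • P (B (P w)) = 0} := by
  obtain ⟨hγ0, -⟩ := hγ
  have hγne : γ ≠ 0 := ne_of_gt hγ0
  -- uniqueness / computation of the projection P
  have key : ∀ v u : H, v ∈ V → u ∈ Vᗮ → P (v + u) = v := by
    intro v u hv hu
    have h1 := (hP (v + u)).1
    have h2 := (hP (v + u)).2
    have hmem : P (v + u) - v ∈ V := sub_mem h1 hv
    have hmem' : P (v + u) - v ∈ Vᗮ := by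
      have h3 : P (v + u) - v = u - ((v + u) - P (v + u)) := by abel
      rw [h3]
      exact sub_mem hu h2
    have h0 : P (v + u) - v = 0 := by
      have h4 := (Submodule.mem_orthogonal _ _).mp hmem' _ hmem
      exact inner_self_eq_zero.mp h4
    exact (sub_eq_zero.mp h0)
  have hPx : ∀ w : H, P w ∈ V := fun w => (hP w).1
  have hQx : ∀ w : H, w - P w ∈ Vᗮ := fun w => (hP w).2
  have hPid : ∀ v : H, v ∈ V → P v = v := by
    intro v hv
    have h := key v 0 hv (zero_mem _)
    simpa using h
  have hPR : ∀ w : H, P ((2 : ℝ) • P w - w) = P w := by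
    intro w
    have h := key (P w) (-(w - P w)) (hPx w) (neg_mem (hQx w))
    have he : P w + -(w - P w) = (2 : ℝ) • P w - w := by module
    rw [he] at h
    exact h
  -- characterization of the fixed-point set
  have fixIff : ∀ w : H, Tγ (Sγ w) = w ↔
      ∃ u ∈ A (P w), -(γ • P (B (P w))) - (w - P w) = γ • u := by
    intro w
    set s := w - γ • P (B (P w)) with hs
    have hsP : P s = P w - γ • P (B (P w)) := by
      have h := key (P w - γ • P (B (P w))) (w - P w)
        (sub_mem (hPx w) (Submodule.smul_mem _ _ (hPx _))) (hQx w)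
      have he : P w - γ • P (B (P w)) + (w - P w) = s := by rw [hs]; module
      rw [he] at h
      exact h
    have hTval : Tγ (Sγ w) = J ((2 : ℝ) • P s - s) + (w - P w) := by
      rw [hS w, ← hs, hT s]
      have hq : w - P w = s - P s := by rw [hsP, hs]; module
      rw [hq]
      module
    rw [hTval]
    have h1 : J ((2 : ℝ) • P s - s) + (w - P w) = w ↔ J ((2 : ℝ) • P s - s) = P w := by
      constructor
      · intro h
        have h2 := eq_sub_of_add_eq h
        rwa [sub_sub_cancel] at h2
      · intro h
        rw [h]
        abel
    rw [h1, hJ]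
    have h2 : (2 : ℝ) • P s - s - P w = -(γ • P (B (P w))) - (w - P w) := by
      rw [hsP, hs]; module
    rw [h2]
  -- characterization of the zero set
  have zerIff : ∀ w : H,
      (∃ v ∈ partialInvOp P (fun w' => γ • A w') w, v + γ • P (B (P w)) = 0) ↔
      ∃ u ∈ A (P w), -(γ • P (B (P w))) + (w - P w) = γ • u := by
    intro w
    constructor
    · rintro ⟨v, hv, hveq⟩
      have hvval : v = -(γ • P (B (P w))) := eq_neg_of_add_eq_zero_left hveq
      have hvV : v ∈ V := by
        rw [hvval]; exact neg_mem (Submodule.smul_mem _ _ (hPx _))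
      have hPv : P v = v := hPid v hvV
      simp only [partialInvOp, Set.mem_setOf_eq, hPv, sub_self, add_zero] at hv
      rw [Set.mem_smul_set] at hv
      obtain ⟨u, hu, hγu⟩ := hv
      refine ⟨u, hu, ?_⟩
      rw [hγu, hvval]
    · rintro ⟨u, hu, huv⟩
      have hvV : (-(γ • P (B (P w))) : H) ∈ V := neg_mem (Submodule.smul_mem _ _ (hPx _))
      have hPv : P (-(γ • P (B (P w)))) = -(γ • P (B (P w))) := hPid _ hvV
      refine ⟨-(γ • P (B (P w))), ?_, by abel⟩
      simp only [partialInvOp, Set.mem_setOf_eq, hPv, sub_self, add_zero]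
      rw [huv]
      exact Set.smul_mem_smul_set hu
  -- third claim
  have hFG : (fun w => (2 : ℝ) • P w - w) '' {w | Tγ (Sγ w) = w} =
      {w | ∃ v ∈ partialInvOp P (fun w' => γ • A w') w, v + γ • P (B (P w)) = 0} := by
    ext z
    simp only [Set.mem_image, Set.mem_setOf_eq]
    constructor
    · rintro ⟨w, hw, rfl⟩
      rw [zerIff]
      rw [fixIff] at hw
      obtain ⟨u, hu, heq⟩ := hw
      rw [hPR w]
      refine ⟨u, hu, ?_⟩
      rw [← heq]
      module
    · intro hz
      rw [zerIff] at hz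
      obtain ⟨u, hu, heq⟩ := hz
      refine ⟨(2 : ℝ) • P z - z, ?_, by rw [hPR z]; module⟩
      rw [fixIff, hPR z]
      refine ⟨u, hu, ?_⟩
      rw [← heq]
      module
  -- first claim
  have hZF : Z = P '' {w | Tγ (Sγ w) = w} := by
    rw [hZ]
    ext x
    simp only [Set.mem_setOf_eq, Set.mem_image, normalConeSub]
    constructor
    · rintro ⟨u, hu, n, ⟨hxV, hnV⟩, heq⟩
      have hPw : P (x - γ • (u - P u)) = x := by
        have h := key x (-(γ • (u - P u))) hxV
          (neg_mem (Submodule.smul_mem _ _ (hQx u)))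
        have he : x + -(γ • (u - P u)) = x - γ • (u - P u) := by module
        rw [he] at h
        exact h
      have hmem : u + P (B x) ∈ Vᗮ := by
        have he : u + P (B x) = -n - (B x - P (B x)) := by
          have h5 : u + B x = -n := eq_neg_of_add_eq_zero_left heq
          have h6 : u = -n - B x := eq_sub_of_add_eq h5
          rw [h6]; abel
        rw [he]
        exact sub_mem (neg_mem hnV) (hQx _)
      have hPu : P u = -(P (B x)) := by
        have h := key (-(P (B x))) (u + P (B x)) (neg_mem (hPx _)) hmem
        have he2 : -(P (B x)) + (u + P (B x)) = u := by module
        rw [he2] at h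
        exact h
      refine ⟨x - γ • (u - P u), ?_, hPw⟩
      rw [fixIff, hPw]
      refine ⟨u, hu, ?_⟩
      rw [hPu]
      module
    · rintro ⟨w, hw, rfl⟩
      rw [fixIff] at hw
      obtain ⟨u, hu, heq⟩ := hw
      refine ⟨u, hu, -u - B (P w), ⟨hPx w, ?_⟩, by abel⟩
      have hgn : γ • (-u - B (P w)) ∈ Vᗮ := by
        have he : γ • (-u - B (P w)) = (w - P w) - γ • (B (P w) - P (B (P w))) := by
          rw [smul_sub, smul_neg, ← heq]
          module
        rw [he]
        exact sub_mem (hQx w) (Submodule.smul_mem _ _ (hQx _))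
      have hrw : -u - B (P w) = γ⁻¹ • (γ • (-u - B (P w))) := (inv_smul_smul₀ hγne _).symm
      rw [hrw]
      exact Submodule.smul_mem _ _ hgn
  -- second claim via the first and third
  have hcomp : P '' {w | ∃ v ∈ partialInvOp P (fun w' => γ • A w') w, v + γ • P (B (P w)) = 0}
      = P '' {w | Tγ (Sγ w) = w} := by
    rw [← hFG, ← Set.image_comp]
    have : P ∘ (fun w => (2 : ℝ) • P w - w) = P := by
      funext w
      exact hPR w
    rw [this]
  exact ⟨hZF, hZF.trans hcomp.symm, hFG⟩
end

section
/- Let H be a real Hilbert space, V a closed vector subspace of H, A : H → 2^H maximally monotone, B : H → H β-cocoercive on V for some β > 0, and assume the set Z of solutions of 0 ∈ Ax + Bx + N_V x is nonempty. Let γ ∈ (0, 2β), let ε ∈ (0,1), let (λ_n) be a sequence in [ε, 1], let x_0 ∈ V, y_0 ∈ V⊥, and for every n ∈ ℕ set s_n = x_n − γ P_V(Bx_n) + γ y_n, p_n = J_{γA} s_n, y_{n+1} = y_n + (λ_n/γ)(P_V p_n − p_n), and x_{n+1} = x_n + λ_n(P_V p_n − x_n). Then x_n ∈ V and y_n ∈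 V⊥ for all n, and there exist x̄ ∈ Z and ȳ ∈ V⊥ ∩ (Ax̄ + P_V(Bx̄)) such that: x_n converges weakly to x̄, y_n converges weakly to ȳ, x_{n+1} − x_n → 0 and y_{n+1} − y_n → 0 strongly, and P_V(Bx_n) converges strongly to P_V(Bx̄). -/
open Filter Topology
open scoped RealInnerProductSpace Pointwise

variable {H : Type*} [NormedAddCommGroup H] [InnerProductSpace ℝ H] [CompleteSpace H]

set_option linter.unusedSectionVars false

section Aux14
variable {V : Submodule ℝ H} {P : H → H}

lemma s14_unique (hP : ∀ x : H, P x ∈ V ∧ x - P x ∈ Vᗮ) {x v : H}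
    (hv : v ∈ V) (hxv : x - v ∈ Vᗮ) : P x = v := by
  have hmemV : P x - v ∈ V := sub_mem (hP x).1 hv
  have hmemO : P x - v ∈ Vᗮ := by
    have h : P x - v = (x - v) - (x - P x) := by abel
    rw [h]; exact sub_mem hxv (hP x).2
  have h0 : ⟪P x - v, P x - v⟫ = (0:ℝ) :=
    Submodule.inner_right_of_mem_orthogonal hmemV hmemO
  exact sub_eq_zero.mp (inner_self_eq_zero.mp h0)

lemma s14_id (hP : ∀ x : H, P x ∈ V ∧ x - P x ∈ Vᗮ) {a : H} (ha : a ∈ V) : P a = a :=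
  s14_unique hP ha (by simp)

lemma s14_sub (hP : ∀ x : H, P x ∈ V ∧ x - P x ∈ Vᗮ) (a b : H) : P (a - b) = P a - P b := by
  refine s14_unique hP (sub_mem (hP a).1 (hP b).1) ?_
  have h : a - b - (P a - P b) = (a - P a) - (b - P b) := by abel
  rw [h]; exact sub_mem (hP a).2 (hP b).2

lemma s14_inner (hP : ∀ x : H, P x ∈ V ∧ x - P x ∈ Vᗮ) (a b : H) :
    ⟪P a, b⟫ = ⟪P a, P b⟫ := by
  have h : ⟪P a, b - P b⟫ = (0:ℝ) :=
    Submodule.inner_right_of_mem_orthogonal (hP a).1 (hP b).2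
  rw [inner_sub_right] at h; linarith

lemma s14_inner' (hP : ∀ x : H, P x ∈ V ∧ x - P x ∈ Vᗮ) (a b : H) :
    ⟪P a, b⟫ = ⟪a, P b⟫ := by
  calc ⟪P a, b⟫ = ⟪P a, P b⟫ := s14_inner hP a b
    _ = ⟪P b, P a⟫ := real_inner_comm _ _
    _ = ⟪P b, a⟫ := (s14_inner hP b a).symm
    _ = ⟪a, P b⟫ := real_inner_comm _ _

lemma s14_pyth (hP : ∀ x : H, P x ∈ V ∧ x - P x ∈ Vᗮ) (a : H) :
    ‖a‖ ^ 2 = ‖P a‖ ^ 2 + ‖a - P a‖ ^ 2 := by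
  have h : ⟪P a, a - P a⟫ = (0:ℝ) :=
    Submodule.inner_right_of_mem_orthogonal (hP a).1 (hP a).2
  have h2 : a = P a + (a - P a) := by abel
  calc ‖a‖ ^ 2 = ‖P a + (a - P a)‖ ^ 2 := by rw [← h2]
    _ = ‖P a‖ ^ 2 + 2 * ⟪P a, a - P a⟫ + ‖a - P a‖ ^ 2 := norm_add_sq_real _ _
    _ = ‖P a‖ ^ 2 + ‖a - P a‖ ^ 2 := by rw [h]; ring

lemma s14_norm (hP : ∀ x : H, P x ∈ V ∧ x - P x ∈ Vᗮ) (a : H) : ‖P a‖ ≤ ‖a‖ := by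
  have := s14_pyth hP a
  nlinarith [norm_nonneg (P a), norm_nonneg a, sq_nonneg ‖a - P a‖]

end Aux14

lemma s14_sq_tendsto {t : ℕ → ℝ} (h0 : ∀ n, 0 ≤ t n)
    (h : Tendsto (fun n => t n ^ 2) atTop (nhds 0)) : Tendsto t atTop (nhds 0) := by
  have h1 := (Real.continuous_sqrt.tendsto 0).comp h
  rw [Real.sqrt_zero] at h1
  have h2 : (fun n => Real.sqrt (t n ^ 2)) = t := funext fun n => Real.sqrt_sq (h0 n)
  rw [← h2]
  exact h1

set_option maxHeartbeats 4000000 in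

set_option maxHeartbeats 4000000 in
theorem statement14
    (V : Submodule ℝ H) (hV : IsClosed (V : Set H))
    (P : H → H) (hP : ∀ x : H, P x ∈ V ∧ x - P x ∈ Vᗮ)
    (A : H → Set H) (hA : IsMaxMonotoneOp A)
    (β : ℝ) (hβ : 0 < β)
    (B : H → H)
    (hB : ∀ x ∈ V, ∀ y ∈ V, β * ‖B x - B y‖ ^ 2 ≤ ⟪x - y, B x - B y⟫)
    (Z : Set H) (hZ : Z = {x | ∃ u ∈ A x, ∃ w ∈ normalConeSub V x, u + B x + w = 0})
    (hZne : Z.Nonempty)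
    (γ : ℝ) (hγ : γ ∈ Set.Ioo (0 : ℝ) (2 * β))
    (ε : ℝ) (hε : ε ∈ Set.Ioo (0 : ℝ) 1)
    (lam : ℕ → ℝ) (hlam : ∀ n, lam n ∈ Set.Icc ε 1)
    (J : H → H) (hJ : ∀ x p : H, J x = p ↔ ∃ u ∈ A p, x - p = γ • u)
    (x y s p : ℕ → H)
    (hx0 : x 0 ∈ V) (hy0 : y 0 ∈ Vᗮ)
    (hs : ∀ n, s n = x n - γ • P (B (x n)) + γ • y n)
    (hp : ∀ n, p n = J (s n))
    (hyr : ∀ n, y (n + 1) = y n + (lam n / γ) • (P (p n) - p n))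
    (hxr : ∀ n, x (n + 1) = x n + lam n • (P (p n) - x n)) :
    (∀ n, x n ∈ V ∧ y n ∈ Vᗮ) ∧
    ∃ xbar ∈ Z, ∃ ybar : H, ybar ∈ Vᗮ ∧ (∃ u ∈ A xbar, ybar = u + P (B xbar)) ∧
      WeakLim x xbar ∧ WeakLim y ybar ∧
      Tendsto (fun n => x (n + 1) - x n) atTop (nhds 0) ∧
      Tendsto (fun n => y (n + 1) - y n) atTop (nhds 0) ∧
      Tendsto (fun n => P (B (x n))) atTop (nhds (P (B xbar))) := by
  obtain ⟨hγ0, hγβ⟩ := hγ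
  obtain ⟨hε0, hε1⟩ := hε
  have hγne : γ ≠ 0 := ne_of_gt hγ0
  have hk0 : 0 < γ * (2 * β - γ) := mul_pos hγ0 (by linarith)
  have hmono := hA.1
  -- membership of iterates
  have hmem : ∀ n, x n ∈ V ∧ y n ∈ Vᗮ := by
    intro n
    induction n with
    | zero => exact ⟨hx0, hy0⟩
    | succ n ih =>
      refine ⟨?_, ?_⟩
      · rw [hxr n]
        exact add_mem ih.1 (Submodule.smul_mem _ _ (sub_mem (hP (p n)).1 ih.1))
      · rw [hyr n]
        refine add_mem ih.2 (Submodule.smul_mem _ _ ?_)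
        have h : P (p n) - p n = -(p n - P (p n)) := by abel
        rw [h]; exact neg_mem (hP (p n)).2
  refine ⟨hmem, ?_⟩
  classical
  set C : H → H := fun w => P (B (P w)) with hCdef
  set Q : H → H := fun w => (2:ℝ) • P (J w) - J w + (w - P w) with hQdef
  set T : H → H := fun w => Q (w - γ • C w) with hTdef
  set z : ℕ → H := fun n => x n + γ • y n with hzdef
  have hCapp : ∀ w, C w = P (B (P w)) := fun w => rfl
  have hQapp : ∀ w, Q w = (2:ℝ) • P (J w) - J w + (w - P w) := fun w => rfl
  have hTapp : ∀ w, T w = Q (w - γ • C w) := fun w => rfl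
  have hzapp : ∀ n, z n = x n + γ • y n := fun n => rfl
  have hPz : ∀ n, P (z n) = x n := by
    intro n
    refine s14_unique hP (hmem n).1 ?_
    have h : z n - x n = γ • y n := by rw [hzapp n]; abel
    rw [h]; exact Submodule.smul_mem _ _ (hmem n).2
  have hCz : ∀ n, C (z n) = P (B (x n)) := by
    intro n; rw [hCapp, hPz n]
  have hsz : ∀ n, s n = z n - γ • C (z n) := by
    intro n; rw [hCz n, hs n, hzapp n]; abel
  have hPs : ∀ n, P (s n) = x n - γ • P (B (x n)) := by
    intro n
    refine s14_unique hP (sub_mem (hmem n).1 (Submodule.smul_mem _ _ (hP _).1)) ?_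
    have h : s n - (x n - γ • P (B (x n))) = γ • y n := by rw [hs n]; abel
    rw [h]; exact Submodule.smul_mem _ _ (hmem n).2
  have hJs : ∀ n, J (s n) = p n := fun n => (hp n).symm
  have hTz : ∀ n, T (z n) - z n = (2:ℝ) • P (p n) - p n - x n := by
    intro n
    have h1 : T (z n) = Q (s n) := by rw [hTapp, ← hsz n]
    rw [h1, hQapp, hJs n, hPs n, hzapp n, hs n]
    abel
  have hzrec : ∀ n, z (n+1) = z n + lam n • (T (z n) - z n) := by
    intro n
    rw [hTz n, hzapp (n+1), hzapp n, hxr n, hyr n]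
    have h2 : γ • ((lam n / γ) • (P (p n) - p n)) = lam n • (P (p n) - p n) := by
      rw [smul_smul, mul_div_cancel₀ _ hγne]
    rw [smul_add, h2]
    rw [smul_sub (lam n), smul_sub (lam n), smul_sub (lam n)]
    module
  have hres : ∀ w : H, ∃ u, u ∈ A (J w) ∧ w - J w = γ • u := by
    intro w
    obtain ⟨u, hu1, hu2⟩ := (hJ w (J w)).1 rfl
    exact ⟨u, hu1, hu2⟩
  have hmonoJ : ∀ w w' : H, 0 ≤ ⟪J w - J w', (w - J w) - (w' - J w')⟫ := by
    intro w w'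
    obtain ⟨u, huA, hu⟩ := hres w
    obtain ⟨u', hu'A, hu'⟩ := hres w'
    rw [hu, hu', ← smul_sub, real_inner_smul_right]
    exact mul_nonneg (le_of_lt hγ0) (hmono _ _ _ _ huA hu'A)
  have horthA : ∀ a b : H, ⟪P a, b - P b⟫ = (0:ℝ) := fun a b =>
    Submodule.inner_right_of_mem_orthogonal (hP a).1 (hP b).2
  have hfirm : ∀ w w' : H, ‖Q w - Q w'‖^2 ≤ ⟪Q w - Q w', w - w'⟫ := by
    intro w w'
    set e : H := J w - J w' with he
    set d : H := w - w' with hd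
    have hPe : P e = P (J w) - P (J w') := by rw [he, s14_sub hP]
    have hPd : P d = P w - P w' := by rw [hd, s14_sub hP]
    have hq : Q w - Q w' = (2:ℝ) • P e - e + (d - P d) := by
      rw [hQapp, hQapp, hPe, hPd, he, hd]; module
    have hdq : d - (Q w - Q w') = P d + e - (2:ℝ) • P e := by rw [hq]; module
    have key : ⟪Q w - Q w', d - (Q w - Q w')⟫ = ⟪e, d - e⟫ := by
      rw [hdq, hq]
      have hs1 : ⟪P e, e⟫ = ⟪P e, P e⟫ := s14_inner hP e e
      have hs2 : ⟪P e, d⟫ = ⟪P e, P d⟫ := s14_inner hP e d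
      have hs3 : ⟪P d, e⟫ = ⟪P d, P e⟫ := s14_inner hP d e
      have hs4 : ⟪P d, d⟫ = ⟪P d, P d⟫ := s14_inner hP d d
      have hc1 : ⟪e, P e⟫ = ⟪P e, e⟫ := real_inner_comm _ _
      have hc2 : ⟪d, P e⟫ = ⟪P e, d⟫ := real_inner_comm _ _
      have hc3 : ⟪e, P d⟫ = ⟪P d, e⟫ := real_inner_comm _ _
      have hc4 : ⟪d, P d⟫ = ⟪P d, d⟫ := real_inner_comm _ _
      have hc5 : ⟪P d, P e⟫ = ⟪P e, P d⟫ := real_inner_comm _ _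
      have hc6 : ⟪d, e⟫ = ⟪e, d⟫ := real_inner_comm _ _
      simp only [inner_add_left, inner_add_right, inner_sub_left, inner_sub_right,
        real_inner_smul_left, real_inner_smul_right]
      linarith
    have hmm : 0 ≤ ⟪e, d - e⟫ := by
      have h := hmonoJ w w'
      have h2 : (w - J w) - (w' - J w') = d - e := by rw [hd, he]; abel
      rw [h2] at h; exact h
    have hexp : ⟪Q w - Q w', d - (Q w - Q w')⟫
        = ⟪Q w - Q w', d⟫ - ‖Q w - Q w'‖^2 := by
      rw [inner_sub_right, real_inner_self_eq_norm_sq]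
    rw [hexp] at key
    rw [hd] at key ⊢
    linarith
  have hcoco : ∀ a b : H, β * ‖C a - C b‖^2 ≤ ⟪a - b, C a - C b⟫ := by
    intro a b
    have hCe : C a - C b = P (B (P a) - B (P b)) := by
      rw [hCapp, hCapp, s14_sub hP]
    have h1 : ⟪a - b, C a - C b⟫ = ⟪P a - P b, B (P a) - B (P b)⟫ := by
      rw [hCe, ← s14_inner' hP, s14_sub hP]
    have h2 := hB (P a) (hP a).1 (P b) (hP b).1
    have h3 : ‖C a - C b‖ ≤ ‖B (P a) - B (P b)‖ := by rw [hCe]; exact s14_norm hP _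
    have h4 : ‖C a - C b‖^2 ≤ ‖B (P a) - B (P b)‖^2 := by
      nlinarith [norm_nonneg (C a - C b), norm_nonneg (B (P a) - B (P b))]
    rw [h1]
    nlinarith
  have hkey : ∀ a b : H, ‖T a - T b‖^2 + (γ*(2*β - γ)) * ‖C a - C b‖^2
      + ‖(T a - a) - (T b - b) + γ • (C a - C b)‖^2 ≤ ‖a - b‖^2 := by
    intro a b
    have hfi := hfirm (a - γ • C a) (b - γ • C b)
    have hTT : T a - T b = Q (a - γ • C a) - Q (b - γ • C b) := by
      rw [hTapp, hTapp]
    have hdd : (a - γ • C a) - (b - γ • C b) = (a - b) - γ • (C a - C b) := by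
      rw [smul_sub]; abel
    rw [← hTT, hdd] at hfi
    have h1 : ‖(T a - T b) - ((a - b) - γ • (C a - C b))‖^2
        = ‖T a - T b‖^2 - 2*⟪T a - T b, (a - b) - γ • (C a - C b)⟫
          + ‖(a - b) - γ • (C a - C b)‖^2 := norm_sub_sq_real _ _
    have h2 : ‖(a - b) - γ • (C a - C b)‖^2
        = ‖a - b‖^2 - 2*(γ*⟪a - b, C a - C b⟫) + γ^2*‖C a - C b‖^2 := by
      rw [norm_sub_sq_real, real_inner_smul_right, norm_smul, Real.norm_eq_abs,
        mul_pow, sq_abs]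
    have h5 : γ*(β*‖C a - C b‖^2) ≤ γ*⟪a - b, C a - C b⟫ :=
      mul_le_mul_of_nonneg_left (hcoco a b) (le_of_lt hγ0)
    have heq : (T a - a) - (T b - b) + γ • (C a - C b)
        = (T a - T b) - ((a - b) - γ • (C a - C b)) := by abel
    rw [heq]
    linarith [hfi, h1, h2, h5]
  have hTnonexp : ∀ a b : H, ‖T a - T b‖ ≤ ‖a - b‖ := by
    intro a b
    have h := hkey a b
    have h2 : ‖T a - T b‖^2 ≤ ‖a - b‖^2 := by
      nlinarith [sq_nonneg ‖(T a - a) - (T b - b) + γ • (C a - C b)‖,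
        mul_nonneg (le_of_lt hk0) (sq_nonneg ‖C a - C b‖)]
    nlinarith [norm_nonneg (T a - T b), norm_nonneg (a - b)]
  -- fixed point from Z
  obtain ⟨xh, hxhZ⟩ := hZne
  rw [hZ] at hxhZ
  obtain ⟨u, huA, w, ⟨hxhV, hwO⟩, hsum⟩ := hxhZ
  set yh : H := u + P (B xh) with hyh
  set zstar : H := xh + γ • yh with hzstar
  have hyhO : yh ∈ Vᗮ := by
    have hu : u = -(B xh) - w := by
      have h2 : u - (-(B xh) - w) = u + B xh + w := by abel
      rw [hsum] at h2
      exact sub_eq_zero.mp h2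
    have h1 : yh = -(B xh - P (B xh)) - w := by rw [hyh, hu]; abel
    rw [h1]
    exact sub_mem (neg_mem (hP (B xh)).2) hwO
  have hPzstar : P zstar = xh := by
    refine s14_unique hP hxhV ?_
    have h : zstar - xh = γ • yh := by rw [hzstar]; abel
    rw [h]; exact Submodule.smul_mem _ _ hyhO
  have hCzstar : C zstar = P (B xh) := by rw [hCapp, hPzstar]
  have hJstar : J (zstar - γ • C zstar) = xh := by
    refine (hJ _ xh).2 ⟨u, huA, ?_⟩
    rw [hCzstar, hzstar, hyh]
    module
  have hPwstar : P (zstar - γ • C zstar) = xh - γ • P (B xh) := by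
    refine s14_unique hP (sub_mem hxhV (Submodule.smul_mem _ _ (hP _).1)) ?_
    rw [hCzstar]
    have h : zstar - γ • P (B xh) - (xh - γ • P (B xh)) = γ • yh := by rw [hzstar]; abel
    rw [h]; exact Submodule.smul_mem _ _ hyhO
  have hfixstar : T zstar = zstar := by
    rw [hTapp, hQapp, hJstar, hPwstar, hCzstar, s14_id hP hxhV]
    rw [hzstar, hyh]
    module
  -- Fejer-type recursion
  have hrec : ∀ c : H, T c = c → ∀ n,
      ‖z (n+1) - c‖^2 + ε * ((γ*(2*β - γ)) * ‖C (z n) - C c‖^2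
        + ‖(T (z n) - z n) + γ • (C (z n) - C c)‖^2) ≤ ‖z n - c‖^2 := by
    intro c hc n
    obtain ⟨hl1, hl2⟩ := hlam n
    have hl0 : 0 ≤ lam n := le_trans (le_of_lt hε0) hl1
    have hz1 : z (n+1) - c = (z n - c) + lam n • ((T (z n) - c) - (z n - c)) := by
      rw [hzrec n]; module
    have e1 : ‖z (n+1) - c‖^2 = ‖z n - c‖^2
        + 2 * (lam n * ⟪z n - c, (T (z n) - c) - (z n - c)⟫)
        + lam n^2 * ‖(T (z n) - c) - (z n - c)‖^2 := by
      rw [hz1, norm_add_sq_real, real_inner_smul_right, norm_smul, Real.norm_eq_abs,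
        mul_pow, sq_abs]
    have heq2 : T (z n) - c = (z n - c) + ((T (z n) - c) - (z n - c)) := by abel
    have e2 := norm_add_sq_real (z n - c) ((T (z n) - c) - (z n - c))
    rw [← heq2] at e2
    have e2' : ⟪z n - c, (T (z n) - c) - (z n - c)⟫
        = (‖T (z n) - c‖^2 - ‖z n - c‖^2 - ‖(T (z n) - c) - (z n - c)‖^2)/2 := by
      linarith [e2]
    rw [e2'] at e1
    have e3 := hkey (z n) c
    rw [hc] at e3
    have heq3 : (T (z n) - z n) - (c - c) + γ • (C (z n) - C c)
        = (T (z n) - z n) + γ • (C (z n) - C c) := by abel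
    rw [heq3] at e3
    have hD1 : 0 ≤ (γ*(2*β - γ)) * ‖C (z n) - C c‖^2 :=
      mul_nonneg (le_of_lt hk0) (sq_nonneg _)
    have hD2 : 0 ≤ ‖(T (z n) - z n) + γ • (C (z n) - C c)‖^2 := sq_nonneg _
    have hDge : 0 ≤ (γ*(2*β - γ)) * ‖C (z n) - C c‖^2
        + ‖(T (z n) - z n) + γ • (C (z n) - C c)‖^2 := add_nonneg hD1 hD2
    have hint1 : 0 ≤ lam n * (‖z n - c‖^2 - ‖T (z n) - c‖^2
        - ((γ*(2*β - γ)) * ‖C (z n) - C c‖^2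
          + ‖(T (z n) - z n) + γ • (C (z n) - C c)‖^2)) :=
      mul_nonneg hl0 (by linarith [e3])
    have hint2 : 0 ≤ (lam n - ε) * ((γ*(2*β - γ)) * ‖C (z n) - C c‖^2
        + ‖(T (z n) - z n) + γ • (C (z n) - C c)‖^2) :=
      mul_nonneg (by linarith) hDge
    have hint3 : 0 ≤ (lam n * (1 - lam n)) * ‖(T (z n) - c) - (z n - c)‖^2 :=
      mul_nonneg (mul_nonneg hl0 (by linarith)) (sq_nonneg _)
    nlinarith [e1, hint1, hint2, hint3]
  -- monotone convergence of distances to fixed points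
  have hantit : ∀ c : H, T c = c → Antitone (fun n => ‖z n - c‖^2) := by
    intro c hc
    refine antitone_nat_of_succ_le (fun n => ?_)
    have h := hrec c hc n
    have hD1 : 0 ≤ (γ*(2*β - γ)) * ‖C (z n) - C c‖^2 :=
      mul_nonneg (le_of_lt hk0) (sq_nonneg _)
    have hD2 : 0 ≤ ‖(T (z n) - z n) + γ • (C (z n) - C c)‖^2 := sq_nonneg _
    nlinarith
  have hconv : ∀ c : H, T c = c → ∃ L, Tendsto (fun n => ‖z n - c‖^2) atTop (nhds L) := by
    intro c hc
    refine ⟨_, tendsto_atTop_ciInf (hantit c hc) ⟨0, ?_⟩⟩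
    rintro r ⟨n, rfl⟩
    positivity
  obtain ⟨Lst, hLst⟩ := hconv zstar hfixstar
  have hLst' : Tendsto (fun n => ‖z (n+1) - zstar‖^2) atTop (nhds Lst) :=
    hLst.comp (tendsto_add_atTop_nat 1)
  have hDzero : Tendsto (fun n => (γ*(2*β - γ)) * ‖C (z n) - C zstar‖^2
      + ‖(T (z n) - z n) + γ • (C (z n) - C zstar)‖^2) atTop (nhds 0) := by
    have hup : ∀ n, (γ*(2*β - γ)) * ‖C (z n) - C zstar‖^2
        + ‖(T (z n) - z n) + γ • (C (z n) - C zstar)‖^2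
        ≤ ε⁻¹ * (‖z n - zstar‖^2 - ‖z (n+1) - zstar‖^2) := by
      intro n
      have h2 := mul_le_mul_of_nonneg_left (by linarith [hrec zstar hfixstar n] :
        ε * ((γ*(2*β - γ)) * ‖C (z n) - C zstar‖^2
          + ‖(T (z n) - z n) + γ • (C (z n) - C zstar)‖^2)
          ≤ ‖z n - zstar‖^2 - ‖z (n+1) - zstar‖^2) (le_of_lt (inv_pos.2 hε0))
      rw [← mul_assoc, inv_mul_cancel₀ (ne_of_gt hε0), one_mul] at h2
      exact h2
    have hlow : ∀ n, 0 ≤ (γ*(2*β - γ)) * ‖C (z n) - C zstar‖^2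
        + ‖(T (z n) - z n) + γ • (C (z n) - C zstar)‖^2 := fun n =>
      add_nonneg (mul_nonneg (le_of_lt hk0) (sq_nonneg _)) (sq_nonneg _)
    have htnd : Tendsto (fun n => ε⁻¹ * (‖z n - zstar‖^2 - ‖z (n+1) - zstar‖^2))
        atTop (nhds 0) := by
      have := (hLst.sub hLst').const_mul ε⁻¹
      simpa using this
    exact squeeze_zero hlow hup htnd
  have hCtend : Tendsto (fun n => C (z n) - C zstar) atTop (nhds 0) := by
    rw [tendsto_zero_iff_norm_tendsto_zero]
    refine s14_sq_tendsto (fun n => norm_nonneg _) ?_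
    have hup : ∀ n, ‖C (z n) - C zstar‖^2 ≤ (γ*(2*β - γ))⁻¹
        * ((γ*(2*β - γ)) * ‖C (z n) - C zstar‖^2
          + ‖(T (z n) - z n) + γ • (C (z n) - C zstar)‖^2) := by
      intro n
      rw [mul_add, ← mul_assoc, inv_mul_cancel₀ (ne_of_gt hk0), one_mul]
      nlinarith [sq_nonneg ‖(T (z n) - z n) + γ • (C (z n) - C zstar)‖,
        inv_pos.2 hk0]
    refine squeeze_zero (fun n => sq_nonneg _) hup ?_
    have := hDzero.const_mul (γ*(2*β - γ))⁻¹
    simpa using this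
  have hRtend : Tendsto (fun n => (T (z n) - z n) + γ • (C (z n) - C zstar))
      atTop (nhds 0) := by
    rw [tendsto_zero_iff_norm_tendsto_zero]
    refine s14_sq_tendsto (fun n => norm_nonneg _) ?_
    have hup : ∀ n, ‖(T (z n) - z n) + γ • (C (z n) - C zstar)‖^2
        ≤ (γ*(2*β - γ)) * ‖C (z n) - C zstar‖^2
          + ‖(T (z n) - z n) + γ • (C (z n) - C zstar)‖^2 := fun n => by
      nlinarith [mul_nonneg (le_of_lt hk0) (sq_nonneg ‖C (z n) - C zstar‖)]
    exact squeeze_zero (fun n => sq_nonneg _) hup hDzero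
  have hTztend : Tendsto (fun n => T (z n) - z n) atTop (nhds 0) := by
    have h := hRtend.sub (hCtend.const_smul γ)
    simp only [smul_zero, sub_zero] at h
    have heq : (fun n => (T (z n) - z n) + γ • (C (z n) - C zstar)
        - γ • (C (z n) - C zstar)) = fun n => T (z n) - z n := by
      funext n; abel
    rwa [heq] at h
  have hdz : Tendsto (fun n => z (n+1) - z n) atTop (nhds 0) := by
    rw [tendsto_zero_iff_norm_tendsto_zero]
    have hup : ∀ n, ‖z (n+1) - z n‖ ≤ ‖T (z n) - z n‖ := by
      intro n
      have h : z (n+1) - z n = lam n • (T (z n) - z n) := by rw [hzrec n]; abel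
      rw [h, norm_smul, Real.norm_eq_abs,
        abs_of_nonneg (le_trans (le_of_lt hε0) (hlam n).1)]
      calc lam n * ‖T (z n) - z n‖ ≤ 1 * ‖T (z n) - z n‖ :=
            mul_le_mul_of_nonneg_right (hlam n).2 (norm_nonneg _)
        _ = ‖T (z n) - z n‖ := one_mul _
    have h2 : Tendsto (fun n => ‖T (z n) - z n‖) atTop (nhds 0) := by
      have := hTztend.norm; simpa using this
    exact squeeze_zero (fun n => norm_nonneg _) hup h2
  -- boundedness
  set Rb : ℝ := ‖zstar‖ + ‖z 0 - zstar‖ with hRb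
  have hzbd : ∀ n, ‖z n‖ ≤ Rb := by
    intro n
    have h1 : ‖z n - zstar‖^2 ≤ ‖z 0 - zstar‖^2 := hantit zstar hfixstar (Nat.zero_le n)
    have h2 : ‖z n - zstar‖ ≤ ‖z 0 - zstar‖ := by
      nlinarith [norm_nonneg (z n - zstar), norm_nonneg (z 0 - zstar)]
    calc ‖z n‖ = ‖zstar + (z n - zstar)‖ := by rw [add_sub_cancel]
      _ ≤ ‖zstar‖ + ‖z n - zstar‖ := norm_add_le _ _
      _ ≤ Rb := by rw [hRb]; linarith
  -- weak cluster machinery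
  set Φ : ℕ → WeakDual ℝ H :=
    fun n => StrongDual.toWeakDual (InnerProductSpace.toDual ℝ H (z n)) with hΦ
  have hΦapp : ∀ n v, Φ n v = ⟪z n, v⟫ := by
    intro n v
    rfl
  set zb : WeakDual ℝ H → H :=
    fun ψ => (InnerProductSpace.toDual ℝ H).symm (WeakDual.toStrongDual ψ) with hzb
  have hzbapp : ∀ (ψ : WeakDual ℝ H) (v : H), ψ v = ⟪zb ψ, v⟫ := by
    intro ψ v
    rw [hzb]
    simp only [InnerProductSpace.toDual_symm_apply]
    rfl
  set K : Set (WeakDual ℝ H) := WeakDual.toStrongDual ⁻¹' Metric.closedBall 0 Rb with hK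
  have hKcpt : IsCompact K := WeakDual.isCompact_closedBall (𝕜 := ℝ) (E := H) (0 : StrongDual ℝ H) Rb
  have hΦK : ∀ n, Φ n ∈ K := by
    intro n
    rw [hK]
    simp only [Set.mem_preimage, Metric.mem_closedBall, dist_zero_right]
    have h1 : WeakDual.toStrongDual (Φ n) = InnerProductSpace.toDual ℝ H (z n) := by
      rw [hΦ]
      exact LinearEquiv.symm_apply_apply _ _
    rw [h1, LinearIsometryEquiv.norm_map]
    exact hzbd n
  haveI hmapne : (Filter.map Φ atTop).NeBot := @Filter.NeBot.map ℕ _ atTop atTop_neBot Φ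
  obtain ⟨ψbar, hψbarK, hψbarcl⟩ := hKcpt.exists_clusterPt (f := Filter.map Φ atTop)
    (le_principal_iff.2 (Filter.mem_map.2 (Filter.Eventually.of_forall hΦK)))
  have hGne : ∀ ψ : WeakDual ℝ H, ClusterPt ψ (Filter.map Φ atTop) →
      (atTop ⊓ Filter.comap Φ (nhds ψ)).NeBot := by
    intro ψ hcl
    have h1 : Filter.map Φ (atTop ⊓ Filter.comap Φ (nhds ψ))
        = Filter.map Φ atTop ⊓ nhds ψ := Filter.push_pull Φ atTop (nhds ψ)
    have h2 : (Filter.map Φ atTop ⊓ nhds ψ).NeBot := by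
      rw [inf_comm]; exact hcl
    rw [← Filter.map_neBot_iff Φ, h1]
    exact h2
  have hGtend : ∀ ψ : WeakDual ℝ H, ∀ v : H,
      Tendsto (fun n => ⟪z n, v⟫) (atTop ⊓ Filter.comap Φ (nhds ψ))
        (nhds ⟪zb ψ, v⟫) := by
    intro ψ v
    have h1 : Tendsto Φ (atTop ⊓ Filter.comap Φ (nhds ψ)) (nhds ψ) := by
      rw [tendsto_iff_comap]; exact inf_le_right
    have h2 := ((WeakDual.eval_continuous v).tendsto ψ).comp h1
    have h3 : ((fun ψ' : WeakDual ℝ H => ψ' v) ∘ Φ) = fun n => ⟪z n, v⟫ := by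
      funext n; exact hΦapp n v
    rw [h3, hzbapp ψ v] at h2
    exact h2
  have hfixcl : ∀ ψ : WeakDual ℝ H, ClusterPt ψ (Filter.map Φ atTop) →
      T (zb ψ) = zb ψ := by
    intro ψ hcl
    haveI hne := hGne ψ hcl
    have hmle : ∀ n, ‖z n - zb ψ‖ ≤ Rb + ‖zb ψ‖ := fun n => by
      calc ‖z n - zb ψ‖ ≤ ‖z n‖ + ‖zb ψ‖ := norm_sub_le _ _
        _ ≤ Rb + ‖zb ψ‖ := by linarith [hzbd n]
    have hrn : Tendsto (fun n => ‖T (z n) - z n‖) atTop (nhds 0) := by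
      have := hTztend.norm; simpa using this
    have hrnG : Tendsto (fun n => ‖T (z n) - z n‖)
        (atTop ⊓ Filter.comap Φ (nhds ψ)) (nhds 0) := hrn.mono_left inf_le_left
    have hinG := hGtend ψ (zb ψ - T (zb ψ))
    have hineq : ∀ n, ‖zb ψ - T (zb ψ)‖^2 ≤ ‖T (z n) - z n‖^2
        + 2*(‖T (z n) - z n‖*(Rb + ‖zb ψ‖))
        - 2*(⟪z n, zb ψ - T (zb ψ)⟫ - ⟪zb ψ, zb ψ - T (zb ψ)⟫) := by
      intro n
      have hid : ‖z n - T (zb ψ)‖^2 = ‖z n - zb ψ‖^2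
          + 2*⟪z n - zb ψ, zb ψ - T (zb ψ)⟫ + ‖zb ψ - T (zb ψ)‖^2 := by
        have h : z n - T (zb ψ) = (z n - zb ψ) + (zb ψ - T (zb ψ)) := by abel
        have h2 := norm_add_sq_real (z n - zb ψ) (zb ψ - T (zb ψ))
        rw [← h] at h2; exact h2
      have htri : ‖z n - T (zb ψ)‖ ≤ ‖T (z n) - z n‖ + ‖z n - zb ψ‖ := by
        calc ‖z n - T (zb ψ)‖ ≤ ‖z n - T (z n)‖ + ‖T (z n) - T (zb ψ)‖ := by
              have h : z n - T (zb ψ) = (z n - T (z n)) + (T (z n) - T (zb ψ)) := by abel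
              rw [h]; exact norm_add_le _ _
          _ ≤ ‖T (z n) - z n‖ + ‖z n - zb ψ‖ := by
              rw [norm_sub_rev (z n)]
              exact add_le_add le_rfl (hTnonexp (z n) (zb ψ))
      have hsq : ‖z n - T (zb ψ)‖^2 ≤ (‖T (z n) - z n‖ + ‖z n - zb ψ‖)^2 := by
        nlinarith [norm_nonneg (z n - T (zb ψ)),
          norm_nonneg (T (z n) - z n), norm_nonneg (z n - zb ψ)]
      have hinner : ⟪z n - zb ψ, zb ψ - T (zb ψ)⟫
          = ⟪z n, zb ψ - T (zb ψ)⟫ - ⟪zb ψ, zb ψ - T (zb ψ)⟫ := inner_sub_left _ _ _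
      nlinarith [hid, hsq, hinner,
        mul_le_mul_of_nonneg_left (hmle n) (norm_nonneg (T (z n) - z n))]
    have hgtend : Tendsto (fun n => ‖T (z n) - z n‖^2
        + 2*(‖T (z n) - z n‖*(Rb + ‖zb ψ‖))
        - 2*(⟪z n, zb ψ - T (zb ψ)⟫ - ⟪zb ψ, zb ψ - T (zb ψ)⟫))
        (atTop ⊓ Filter.comap Φ (nhds ψ)) (nhds 0) := by
      have h1 : Tendsto (fun n => ‖T (z n) - z n‖^2)
          (atTop ⊓ Filter.comap Φ (nhds ψ)) (nhds 0) := by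
        have := hrnG.mul hrnG; simpa [sq] using this
      have h2 : Tendsto (fun n => 2*(‖T (z n) - z n‖*(Rb + ‖zb ψ‖)))
          (atTop ⊓ Filter.comap Φ (nhds ψ)) (nhds 0) := by
        have := (hrnG.mul_const (Rb + ‖zb ψ‖)).const_mul 2; simpa using this
      have h3 : Tendsto (fun n => 2*(⟪z n, zb ψ - T (zb ψ)⟫
          - ⟪zb ψ, zb ψ - T (zb ψ)⟫))
          (atTop ⊓ Filter.comap Φ (nhds ψ)) (nhds 0) := by
        have := (hinG.sub_const ⟪zb ψ, zb ψ - T (zb ψ)⟫).const_mul 2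
        simpa using this
      have := (h1.add h2).sub h3; simpa using this
    have hfinal : ‖zb ψ - T (zb ψ)‖^2 ≤ 0 :=
      ge_of_tendsto hgtend (Filter.Eventually.of_forall hineq)
    have h0 : ‖zb ψ - T (zb ψ)‖ ^ 2 = 0 := le_antisymm hfinal (sq_nonneg _)
    have h1 : zb ψ - T (zb ψ) = 0 := by
      rw [pow_eq_zero_iff two_ne_zero] at h0
      exact norm_eq_zero.mp h0
    exact (sub_eq_zero.mp h1).symm
  have huniq : ∀ ψ : WeakDual ℝ H, ClusterPt ψ (Filter.map Φ atTop) → ψ = ψbar := by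
    suffices hU : ∀ ψ1 ψ2 : WeakDual ℝ H, ClusterPt ψ1 (Filter.map Φ atTop) →
        ClusterPt ψ2 (Filter.map Φ atTop) → zb ψ1 = zb ψ2 by
      intro ψ hcl
      have h := hU ψ ψbar hcl hψbarcl
      have h2 : WeakDual.toStrongDual ψ = WeakDual.toStrongDual ψbar :=
        (InnerProductSpace.toDual ℝ H).symm.injective h
      exact WeakDual.toStrongDual.injective h2
    intro ψ1 ψ2 h1 h2
    obtain ⟨L1, hL1⟩ := hconv (zb ψ1) (hfixcl ψ1 h1)
    obtain ⟨L2, hL2⟩ := hconv (zb ψ2) (hfixcl ψ2 h2)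
    have hhid : ∀ n, ⟪z n, zb ψ1 - zb ψ2⟫
        = (‖zb ψ1‖^2 - ‖zb ψ2‖^2 - (‖z n - zb ψ1‖^2 - ‖z n - zb ψ2‖^2))/2 := by
      intro n
      rw [inner_sub_right, norm_sub_sq_real, norm_sub_sq_real]
      ring
    have hlim : Tendsto (fun n => ⟪z n, zb ψ1 - zb ψ2⟫) atTop
        (nhds ((‖zb ψ1‖^2 - ‖zb ψ2‖^2 - (L1 - L2))/2)) := by
      simp only [hhid]
      exact (tendsto_const_nhds.sub (hL1.sub hL2)).div_const 2
    haveI hn1 := hGne ψ1 h1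
    haveI hn2 := hGne ψ2 h2
    have ha1 : ⟪zb ψ1, zb ψ1 - zb ψ2⟫ = (‖zb ψ1‖^2 - ‖zb ψ2‖^2 - (L1 - L2))/2 :=
      tendsto_nhds_unique (hGtend ψ1 (zb ψ1 - zb ψ2)) (hlim.mono_left inf_le_left)
    have ha2 : ⟪zb ψ2, zb ψ1 - zb ψ2⟫ = (‖zb ψ1‖^2 - ‖zb ψ2‖^2 - (L1 - L2))/2 :=
      tendsto_nhds_unique (hGtend ψ2 (zb ψ1 - zb ψ2)) (hlim.mono_left inf_le_left)
    have hz0 : ⟪zb ψ1 - zb ψ2, zb ψ1 - zb ψ2⟫ = (0:ℝ) := by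
      rw [inner_sub_left]; linarith
    exact sub_eq_zero.mp (inner_self_eq_zero.mp hz0)
  have hΦtend : Tendsto Φ atTop (nhds ψbar) :=
    hKcpt.tendsto_nhds_of_unique_mapClusterPt (Filter.Eventually.of_forall hΦK)
      (fun ψ _ hcl => huniq ψ hcl.clusterPt)
  have hzweak : ∀ v, Tendsto (fun n => ⟪z n, v⟫) atTop (nhds ⟪zb ψbar, v⟫) := by
    intro v
    have h2 := ((WeakDual.eval_continuous v).tendsto ψbar).comp hΦtend
    have h3 : ((fun ψ' : WeakDual ℝ H => ψ' v) ∘ Φ) = fun n => ⟪z n, v⟫ := by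
      funext n; exact hΦapp n v
    rw [h3, hzbapp ψbar v] at h2
    exact h2
  set zbar : H := zb ψbar with hzbar
  have hfixbar : T zbar = zbar := hfixcl ψbar hψbarcl
  have hCbar : C zbar = C zstar := by
    have h := hkey zbar zstar
    rw [hfixbar, hfixstar] at h
    have h2 : (zbar - zbar) - (zstar - zstar) + γ • (C zbar - C zstar)
        = γ • (C zbar - C zstar) := by abel
    rw [h2] at h
    have h5 : (γ*(2*β - γ)) * ‖C zbar - C zstar‖^2 ≤ 0 := by
      linarith [sq_nonneg ‖γ • (C zbar - C zstar)‖]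
    have h3 : ‖C zbar - C zstar‖^2 ≤ 0 := by
      have h6 := mul_le_mul_of_nonneg_left h5 (le_of_lt (inv_pos.2 hk0))
      rw [← mul_assoc, inv_mul_cancel₀ (ne_of_gt hk0), one_mul, mul_zero] at h6
      exact h6
    have h4 : ‖C zbar - C zstar‖ ^ 2 = 0 := le_antisymm h3 (sq_nonneg _)
    rw [pow_eq_zero_iff two_ne_zero] at h4
    exact sub_eq_zero.mp (norm_eq_zero.mp h4)
  -- unpack the fixed point equation at zbar
  have hPwbar : P (zbar - γ • C zbar) = P zbar - γ • C zbar := by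
    refine s14_unique hP (sub_mem (hP zbar).1 (Submodule.smul_mem _ _ (hP _).1)) ?_
    have h : zbar - γ • C zbar - (P zbar - γ • C zbar) = zbar - P zbar := by abel
    rw [h]; exact (hP zbar).2
  have heqfix : (2:ℝ) • P (J (zbar - γ • C zbar)) - J (zbar - γ • C zbar)
      + (zbar - P zbar) = zbar := by
    have h := hfixbar
    rw [hTapp, hQapp, hPwbar] at h
    have h2 : zbar - γ • C zbar - (P zbar - γ • C zbar) = zbar - P zbar := by abel
    rw [h2] at h
    exact h
  have hJw : J (zbar - γ • C zbar)
      = (2:ℝ) • P (J (zbar - γ • C zbar)) - P zbar := by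
    linear_combination (norm := module) -heqfix
  have hJwV : J (zbar - γ • C zbar) ∈ V := by
    rw [hJw]
    exact sub_mem (Submodule.smul_mem _ _ (hP _).1) (hP zbar).1
  have hJweq : J (zbar - γ • C zbar) = P zbar := by
    have h := hJw
    rw [s14_id hP hJwV] at h
    linear_combination (norm := module) -h
  obtain ⟨ub, hubA, hub⟩ := hres (zbar - γ • C zbar)
  rw [hJweq] at hubA hub
  have hub2 : ub = γ⁻¹ • (zbar - P zbar) - P (B (P zbar)) := by
    have hCzb : C zbar = P (B (P zbar)) := hCapp zbar
    have h : γ • ub = γ • (γ⁻¹ • (zbar - P zbar) - P (B (P zbar))) := by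
      rw [smul_sub, smul_inv_smul₀ hγne, ← hub, hCzb]
      abel
    exact smul_right_injective H hγne h
  -- weak limits of x and y
  have hwx : WeakLim x (P zbar) := by
    intro v
    have h1 : ∀ n, ⟪x n, v⟫ = ⟪z n, P v⟫ := by
      intro n; rw [← hPz n, s14_inner' hP]
    have h2 : ⟪P zbar, v⟫ = ⟪zbar, P v⟫ := s14_inner' hP zbar v
    simp only [h1]
    rw [h2]
    exact hzweak (P v)
  have hwy : WeakLim y (γ⁻¹ • (zbar - P zbar)) := by
    intro v
    have h1 : ∀ n, ⟪y n, v⟫ = γ⁻¹ * (⟪z n, v⟫ - ⟪z n, P v⟫) := by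
      intro n
      have h : y n = γ⁻¹ • (z n - P (z n)) := by
        rw [hPz n, hzapp n, add_sub_cancel_left, inv_smul_smul₀ hγne]
      rw [h, real_inner_smul_left, inner_sub_left, s14_inner' hP]
    have h2 : ⟪γ⁻¹ • (zbar - P zbar), v⟫ = γ⁻¹ * (⟪zbar, v⟫ - ⟪zbar, P v⟫) := by
      rw [real_inner_smul_left, inner_sub_left, s14_inner' hP]
    simp only [h1]
    rw [h2]
    exact ((hzweak v).sub (hzweak (P v))).const_mul γ⁻¹
  -- strong convergences
  have hxd : ∀ n, x (n+1) - x n = P (z (n+1) - z n) := by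
    intro n; rw [s14_sub hP, hPz (n+1), hPz n]
  have hxdz : Tendsto (fun n => x (n+1) - x n) atTop (nhds 0) := by
    rw [tendsto_zero_iff_norm_tendsto_zero]
    have hup : ∀ n, ‖x (n+1) - x n‖ ≤ ‖z (n+1) - z n‖ := by
      intro n; rw [hxd n]; exact s14_norm hP _
    have hdn : Tendsto (fun n => ‖z (n+1) - z n‖) atTop (nhds 0) := by
      have := hdz.norm; simpa using this
    exact squeeze_zero (fun n => norm_nonneg _) hup hdn
  have hydz : Tendsto (fun n => y (n+1) - y n) atTop (nhds 0) := by
    have hyd : ∀ n, y (n+1) - y n = γ⁻¹ • ((z (n+1) - z n) - (x (n+1) - x n)) := by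
      intro n
      have h : (z (n+1) - z n) - (x (n+1) - x n) = γ • (y (n+1) - y n) := by
        rw [hzapp (n+1), hzapp n]; module
      rw [h, inv_smul_smul₀ hγne]
    have h := (hdz.sub hxdz).const_smul γ⁻¹
    simp only [sub_zero, smul_zero] at h
    simp only [hyd]
    simpa using h
  have hCzn : Tendsto (fun n => P (B (x n))) atTop (nhds (P (B (P zbar)))) := by
    have h1 : Tendsto (fun n => C (z n)) atTop (nhds (C zstar)) := by
      have h := hCtend.add_const (C zstar)
      simp only [zero_add] at h
      have heq : (fun n => C (z n) - C zstar + C zstar) = fun n => C (z n) := by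
        funext n; abel
      rwa [heq] at h
    have h2 : (fun n => C (z n)) = fun n => P (B (x n)) := by
      funext n; exact hCz n
    have h3 : C zstar = P (B (P zbar)) := by rw [← hCbar]
    rw [h2, h3] at h1
    exact h1
  -- assemble
  refine ⟨P zbar, ?_, γ⁻¹ • (zbar - P zbar),
    Submodule.smul_mem _ _ (hP zbar).2, ⟨ub, hubA, ?_⟩, hwx, hwy, hxdz, hydz, hCzn⟩
  · rw [hZ]
    refine ⟨ub, hubA, -(γ⁻¹ • (zbar - P zbar)) + P (B (P zbar)) - B (P zbar),
      ⟨(hP zbar).1, ?_⟩, ?_⟩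
    · have h : -(γ⁻¹ • (zbar - P zbar)) + P (B (P zbar)) - B (P zbar)
          = -(γ⁻¹ • (zbar - P zbar)) - (B (P zbar) - P (B (P zbar))) := by abel
      rw [h]
      exact sub_mem (neg_mem (Submodule.smul_mem _ _ (hP zbar).2)) (hP _).2
    · rw [hub2]; abel
  · rw [hub2]; abel
end

section
/- Let H be a real Hilbert space, V a closed vector subspace of H, A : H → 2^H maximally monotone, B : H → H β-cocoercive on V for some β > 0, let γ ∈ (0, 2β), let ε ∈ (0,1), let (λ_n) be a sequence in [ε, 1], and let x_0 ∈ V and y_0 ∈ V⊥. Define the sequence (x_n¹, y_n¹) by: z_0 = x_0 − γ y_0 and, for every n, x_n¹ = P_V z_n, y_n¹ = −P_{V⊥} z_n / γ, z_{n+1} = z_n + λ_n( J_{γA}( x_n¹ − γ P_V(B x_n¹) + γ y_n¹ ) − x_n¹ ). Define the sequence (x_n², y_n²) by: x_0² = x_0, y_0² = y_0 and, for every n, p_n = J_{γA}( x_n² − γ P_V(B x_n²) + γ y_n² ), y_{n+1}² = y_n² + (λ_n/γ)(P_V p_n − p_n), x_{n+1}² = x_n² + λ_n(P_V p_n − x_n²).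 Then for every n ∈ ℕ, x_n¹ = x_n² and y_n¹ = y_n². -/
open Filter Topology
open scoped RealInnerProductSpace Pointwise

variable {H : Type*} [NormedAddCommGroup H] [InnerProductSpace ℝ H] [CompleteSpace H]

theorem statement15
    (V : Submodule ℝ H) (hV : IsClosed (V : Set H))
    (P : H → H) (hP : ∀ x : H, P x ∈ V ∧ x - P x ∈ Vᗮ)
    (A : H → Set H) (hA : IsMaxMonotoneOp A)
    (β : ℝ) (hβ : 0 < β)
    (B : H → H)
    (hB : ∀ x ∈ V, ∀ y ∈ V, β * ‖B x - B y‖ ^ 2 ≤ ⟪x - y, B x - B y⟫)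
    (γ : ℝ) (hγ : γ ∈ Set.Ioo (0 : ℝ) (2 * β))
    (ε : ℝ) (hε : ε ∈ Set.Ioo (0 : ℝ) 1)
    (lam : ℕ → ℝ) (hlam : ∀ n, lam n ∈ Set.Icc ε 1)
    (J : H → H) (hJ : ∀ x p : H, J x = p ↔ ∃ u ∈ A p, x - p = γ • u)
    (x0 y0 : H) (hx0 : x0 ∈ V) (hy0 : y0 ∈ Vᗮ)
    (z x1 y1 x2 y2 p : ℕ → H)
    (hz0 : z 0 = x0 - γ • y0)
    (hx1 : ∀ n, x1 n = P (z n))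
    (hy1 : ∀ n, y1 n = -(γ⁻¹ • (z n - P (z n))))
    (hzr : ∀ n, z (n + 1) =
      z n + lam n • (J (x1 n - γ • P (B (x1 n)) + γ • y1 n) - x1 n))
    (hx20 : x2 0 = x0) (hy20 : y2 0 = y0)
    (hpn : ∀ n, p n = J (x2 n - γ • P (B (x2 n)) + γ • y2 n))
    (hy2r : ∀ n, y2 (n + 1) = y2 n + (lam n / γ) • (P (p n) - p n))
    (hx2r : ∀ n, x2 (n + 1) = x2 n + lam n • (P (p n) - x2 n)) :
    ∀ n, x1 n = x2 n ∧ y1 n = y2 n := by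
  have hγ0 : γ ≠ 0 := ne_of_gt hγ.1
  have hPdec : ∀ a b : H, a ∈ V → b ∈ Vᗮ → P (a + b) = a := by
    intro a b ha hb
    have hd1 : P (a + b) - a ∈ V := V.sub_mem (hP (a + b)).1 ha
    have hd2 : P (a + b) - a ∈ Vᗮ := by
      have h : P (a + b) - a = b - ((a + b) - P (a + b)) := by abel
      rw [h]
      exact Vᗮ.sub_mem hb (hP (a + b)).2
    have h0 : ⟪P (a + b) - a, P (a + b) - a⟫ = 0 := by
      rw [real_inner_comm]; exact hd2 _ hd1
    exact sub_eq_zero.mp (inner_self_eq_zero.mp h0)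
  have hPz : ∀ n, x2 n ∈ V → y2 n ∈ Vᗮ → z n = x2 n - γ • y2 n →
      x1 n = x2 n ∧ y1 n = y2 n := by
    intro n hxV hyV hzn
    have hdec : z n = x2 n + (-γ) • y2 n := by rw [hzn]; module
    have hPzn : P (z n) = x2 n := by
      rw [hdec]; exact hPdec _ _ hxV (Vᗮ.smul_mem _ hyV)
    constructor
    · rw [hx1 n, hPzn]
    · rw [hy1 n, hPzn, hzn]
      have h : x2 n - γ • y2 n - x2 n = -(γ • y2 n) := by abel
      rw [h, smul_neg, smul_smul, inv_mul_cancel₀ hγ0, one_smul, neg_neg]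
  have key : ∀ n, x2 n ∈ V ∧ y2 n ∈ Vᗮ ∧ z n = x2 n - γ • y2 n := by
    intro n
    induction n with
    | zero =>
      refine ⟨by rw [hx20]; exact hx0, by rw [hy20]; exact hy0, ?_⟩
      rw [hz0, hx20, hy20]
    | succ n ih =>
      obtain ⟨hxV, hyV, hzn⟩ := ih
      obtain ⟨hx1n, hy1n⟩ := hPz n hxV hyV hzn
      have hpsame : J (x1 n - γ • P (B (x1 n)) + γ • y1 n) = p n := by
        rw [hx1n, hy1n, hpn n]
      have hc : γ * (lam n / γ) = lam n := by field_simp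
      refine ⟨?_, ?_, ?_⟩
      · rw [hx2r n]
        exact V.add_mem hxV (V.smul_mem _ (V.sub_mem (hP (p n)).1 hxV))
      · rw [hy2r n]
        refine Vᗮ.add_mem hyV (Vᗮ.smul_mem _ ?_)
        have h : P (p n) - p n = -(p n - P (p n)) := by abel
        rw [h]
        exact Vᗮ.neg_mem (hP (p n)).2
      · rw [hzr n, hpsame, hx1n, hzn, hx2r n, hy2r n, smul_add, smul_smul, hc]
        module
  intro n
  obtain ⟨hxV, hyV, hzn⟩ := key n
  exact hPz n hxV hyV hzn
end
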